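/- arXiv:2002.02480 — 12 statements merged into one kernel-verified Lean document; each statement's English description precedes it below -/
import Mathlib

section
/- For any infinite cardinal κ, the colouring Δ_κ : [2^κ]² → κ has no monochromatic odd cycles: there is no odd k ≥ 3 and injective sequence x_0, ..., x_{k-1} of functions κ → 2 such that Δ(x_i, x_{i+1}) (indices mod k) takes a single constant value. -/
/-- `i` is the least point of disagreement between `x` and `y`. -/
def IsDelta {κ : Type*} [LinearOrder κ] (x y : κ → Bool) (i : κ) : Prop :=
  x i ≠ y i ∧ ∀ j, j < i → x j = y j

/-- The colouring `Δ_κ` on `[2^κ]²` has no monochromatic odd cycles. -/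
theorem stmt1 {κ : Type*} [LinearOrder κ] [WellFoundedLT κ] [Infinite κ] :
    ¬ ∃ (k : ℕ), 3 ≤ k ∧ Odd k ∧ ∃ (x : ZMod k → (κ → Bool)) (i : κ),
      Function.Injective x ∧ ∀ j : ZMod k, IsDelta (x j) (x (j + 1)) i := by
  rintro ⟨k, hk3, hodd, x, i, -, hdelta⟩
  have hflip : ∀ j : ZMod k, x (j + 1) i = !(x j i) := by
    intro j
    have := (hdelta j).1
    cases h1 : x j i <;> cases h2 : x (j + 1) i <;> simp_all
  have key : ∀ n : ℕ, x (n : ZMod k) i = if Even n then x 0 i else !(x 0 i) := by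
    intro n
    induction n with
    | zero => simp
    | succ n ih =>
      push_cast
      rw [hflip, ih]
      rcases Nat.even_or_odd n with h | h
      · simp [h, Nat.even_add_one]
      · simp [Nat.not_even_iff_odd.mpr h, Nat.even_add_one, Nat.not_odd_iff_even.mpr]
  have hk := key k
  rw [ZMod.natCast_self, if_neg (Nat.not_even_iff_odd.mpr hodd)] at hk
  exact (Bool.not_ne_self _).symm hk
end

section
/- For any Δ-regressive colouring c : [2^{ω+1}]² → ω+1 (i.e., c(x,y) < Δ(x,y) whenever Δ(x,y) > 0), there exists m < ω such that for every k ≥ 3, c has a monochromatic cycle of colour m and length k. -/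
namespace Stmt3Aux

abbrev Pt := WithTop ℕ → Bool

/-- helper: decompose an element below a finite coordinate -/
lemma lt_coe_elim {j : WithTop ℕ} {n : ℕ} (h : j < (n : WithTop ℕ)) :
    ∃ p : ℕ, j = (p : WithTop ℕ) ∧ p < n := by
  cases j using WithTop.recTopCoe with
  | top => exact absurd h (by simp)
  | coe p =>
    refine ⟨p, by norm_cast, ?_⟩
    rw [show ((n:ℕ) : WithTop ℕ) = WithTop.some n by norm_cast] at h
    exact_mod_cast h

variable (c : Pt → Pt → WithTop ℕ)

/-- all pairs of distinct points which are `false` below coordinate `m+1`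
get colour at least `m`. -/
def Tight (m : ℕ) : Prop :=
  ∀ x y : Pt, x ≠ y →
    (∀ j : WithTop ℕ, j < ((m+1 : ℕ) : WithTop ℕ) → x j = false ∧ y j = false) →
    (m : WithTop ℕ) ≤ c x y

/-- there is an `m`-coloured edge between points which are `false` below `m+1`
and moreover agree below coordinate `m+2`. -/
def Extra (m : ℕ) : Prop :=
  ∃ u v : Pt, u ≠ v ∧ c u v = (m : WithTop ℕ) ∧
    (∀ j : WithTop ℕ, j < ((m+1 : ℕ) : WithTop ℕ) → u j = false) ∧
    (∀ j : WithTop ℕ, j < ((m+2 : ℕ) : WithTop ℕ) → u j = v j)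

variable {c}
variable (hreg : ∀ x y i, x ≠ y → IsDelta x y i → 0 < i → c x y < i)

include hreg in
/-- the forced-colour lemma: under `Tight m`, points false below `m+1` which
differ at coordinate `m+1` get colour exactly `m`. -/
lemma forced {m : ℕ} (hT : Tight c m) {x y : Pt}
    (hlow : ∀ j : WithTop ℕ, j < ((m+1:ℕ) : WithTop ℕ) → x j = false ∧ y j = false)
    (hdiff : x ((m+1:ℕ) : WithTop ℕ) ≠ y ((m+1:ℕ) : WithTop ℕ)) :
    c x y = (m : WithTop ℕ) := by
  have hne : x ≠ y := fun h => hdiff (by rw [h])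
  have hd : IsDelta x y ((m+1:ℕ) : WithTop ℕ) :=
    ⟨hdiff, fun j hj => by obtain ⟨h1, h2⟩ := hlow j hj; rw [h1, h2]⟩
  have hpos : (0 : WithTop ℕ) < ((m+1:ℕ) : WithTop ℕ) := by
    exact_mod_cast Nat.succ_pos m
  have hlt := hreg x y _ hne hd hpos
  have hge := hT x y hne hlow
  obtain ⟨n, hn⟩ : ∃ n : ℕ, c x y = (n : WithTop ℕ) := by
    have := hlt.ne_top
    lift c x y to ℕ using this with n hn
    exact ⟨n, rfl⟩
  rw [hn] at hlt hge ⊢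
  have h1 : n < m + 1 := by exact_mod_cast hlt
  have h2 : m ≤ n := by exact_mod_cast hge
  have : n = m := by omega
  rw [this]

lemma tight_zero : Tight c 0 := fun _ _ _ _ => by
  simp

lemma tight_succ {m : ℕ} (hT : Tight c m) (hnex : ¬ Extra c m) : Tight c (m+1) := by
  intro x y hne hlow
  have hmono : ((m+1:ℕ) : WithTop ℕ) < ((m+1+1:ℕ) : WithTop ℕ) := by
    exact_mod_cast Nat.lt_succ_self _
  have hlow' : ∀ j : WithTop ℕ, j < ((m+1:ℕ) : WithTop ℕ) → x j = false ∧ y j = false :=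
    fun j hj => hlow j (hj.trans hmono)
  have hge : (m : WithTop ℕ) ≤ c x y := hT x y hne hlow'
  by_contra hcon
  have hlt : c x y < ((m+1:ℕ) : WithTop ℕ) := by
    push_cast at hcon ⊢
    exact lt_of_not_ge hcon
  obtain ⟨n, hn⟩ : ∃ n : ℕ, c x y = (n : WithTop ℕ) := by
    lift c x y to ℕ using hlt.ne_top with n hn
    exact ⟨n, rfl⟩
  rw [hn] at hlt hge
  have h1 : n < m + 1 := by exact_mod_cast hlt
  have h2 : m ≤ n := by exact_mod_cast hge
  have hnm : n = m := by omega
  apply hnex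
  exact ⟨x, y, hne, by rw [hn, hnm], fun j hj => (hlow j (hj.trans hmono)).1,
    fun j hj => by rw [(hlow j hj).1, (hlow j hj).2]⟩

include hreg in
lemma exists_tight_extra : ∃ m : ℕ, Tight c m ∧ Extra c m := by
  by_contra hcon
  push_neg at hcon
  have hall : ∀ m : ℕ, Tight c m := by
    intro m
    induction m with
    | zero => exact tight_zero
    | succ m ih => exact tight_succ ih (hcon m ih)
  -- the two points differing only at ⊤
  set a : Pt := fun _ => false with ha
  set b : Pt := fun j => decide (j = ⊤) with hb
  have hab : a ≠ b := by
    intro h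
    have := congrFun h ⊤
    simp [ha, hb] at this
  have hd : IsDelta a b ⊤ := by
    constructor
    · simp [ha, hb]
    · intro j hj
      have hjt : j ≠ ⊤ := LT.lt.ne_top hj
      simp [ha, hb, hjt]
  have hfin : c a b < ⊤ := hreg a b ⊤ hab hd (by simp)
  obtain ⟨n, hn⟩ : ∃ n : ℕ, c a b = (n : WithTop ℕ) := by
    lift c a b to ℕ using hfin.ne_top with n hn
    exact ⟨n, rfl⟩
  have := hall (n+1) a b hab (by
    intro j hj
    have hjt : j ≠ ⊤ := LT.lt.ne_top hj
    constructor
    · rfl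
    · simp [hb, hjt])
  rw [hn] at this
  exact absurd (by exact_mod_cast this : n + 1 ≤ n) (by omega)

/-- wrapper turning a `ℕ`-indexed cyclic construction into a `ZMod k` one. -/
lemma cycle_wrap {m k : ℕ} (hk : 3 ≤ k) (f : ℕ → Pt)
    (hinj : ∀ a, a < k → ∀ b, b < k → a ≠ b → f a ≠ f b)
    (hadj : ∀ a, a < k → c (f a) (f ((a+1) % k)) = (m : WithTop ℕ)) :
    ∃ x : ZMod k → Pt, Function.Injective x ∧
      ∀ j : ZMod k, c (x j) (x (j + 1)) = (m : WithTop ℕ) := by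
  haveI : NeZero k := ⟨by omega⟩
  refine ⟨fun j => f j.val, ?_, ?_⟩
  · intro j j' h
    by_contra hne
    exact hinj j.val (ZMod.val_lt j) j'.val (ZMod.val_lt j')
      (fun hh => hne (ZMod.val_injective k hh)) h
  · intro j
    have hone : (1 : ZMod k).val = 1 := by
      rw [ZMod.val_one_eq_one_mod]; exact Nat.mod_eq_of_lt (by omega)
    have hval : (j + 1).val = (j.val + 1) % k := by
      rw [ZMod.val_add, hone]
    simp only [hval]
    exact hadj j.val (ZMod.val_lt j)

end Stmt3Aux

open Stmt3Aux in
/-- Any `Δ`-regressive colouring on `[2^{ω+1}]²` (the ordinal `ω+1` is modelled by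
`WithTop ℕ`) has, for some fixed colour `m < ω`, monochromatic cycles of colour `m`
of every length `k ≥ 3`. -/
theorem stmt3 (c : (WithTop ℕ → Bool) → (WithTop ℕ → Bool) → WithTop ℕ)
    (hsymm : ∀ x y, c x y = c y x)
    (hreg : ∀ x y i, x ≠ y → IsDelta x y i → 0 < i → c x y < i) :
    ∃ m : ℕ, ∀ k : ℕ, 3 ≤ k → ∃ x : ZMod k → (WithTop ℕ → Bool),
      Function.Injective x ∧ ∀ j : ZMod k, c (x j) (x (j + 1)) = (m : WithTop ℕ) := by
  obtain ⟨m, hT, u, v, huv, hcuv, hulow, hagree⟩ := exists_tight_extra hreg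
  -- notation
  set X : WithTop ℕ := ((m+1 : ℕ) : WithTop ℕ) with hX
  have hX2 : X < ((m+2:ℕ) : WithTop ℕ) := by
    rw [hX]; exact_mod_cast (by omega : m + 1 < m + 2)
  have hvlow : ∀ j : WithTop ℕ, j < X → v j = false := by
    intro j hj
    rw [← hagree j (hj.trans hX2)]
    exact hulow j hj
  have huvX : u X = v X := hagree X hX2
  refine ⟨m, ?_⟩
  intro k hk
  rcases Nat.even_or_odd k with hke | hko
  · -- even cycle: pure zigzag at coordinate m+1
    set f : ℕ → Pt := fun i j =>
      if j = X then (if i % 2 = 1 then true else false)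
      else if j = ((m+2+i : ℕ) : WithTop ℕ) then true else false with hf
    have hfne : ∀ i : ℕ, ((m+2+i : ℕ) : WithTop ℕ) ≠ X := by
      intro i
      rw [hX]
      exact_mod_cast (by omega : m+2+i ≠ m+1)
    have hflow : ∀ i : ℕ, ∀ j : WithTop ℕ, j < X → f i j = false := by
      intro i j hj
      obtain ⟨p, rfl, hp⟩ := lt_coe_elim (hX ▸ hj)
      have h1 : ((p:ℕ) : WithTop ℕ) ≠ X := by
        rw [hX]; exact_mod_cast (by omega : p ≠ m+1)
      have h2 : ((p:ℕ) : WithTop ℕ) ≠ ((m+2+i : ℕ) : WithTop ℕ) := by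
        exact_mod_cast (by omega : p ≠ m+2+i)
      simp only [hf]
      rw [if_neg h1, if_neg h2]
    have hfX : ∀ i : ℕ, f i X = (if i % 2 = 1 then true else false) := by
      intro i; simp [hf]
    have hpar : ∀ a b_ : ℕ, a % 2 ≠ b_ % 2 → f a X ≠ f b_ X := by
      intro a b_ hab
      rw [hfX, hfX]
      rcases Nat.mod_two_eq_zero_or_one a with h | h <;>
        rcases Nat.mod_two_eq_zero_or_one b_ with h' | h' <;>
        simp [h, h'] at hab ⊢ <;> omega
    apply cycle_wrap hk f
    · -- injectivity
      intro a ha b hb hab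
      intro h
      have hcf := congrFun h ((m+2+b : ℕ) : WithTop ℕ)
      have h2 : ((m+2+b : ℕ) : WithTop ℕ) ≠ ((m+2+a : ℕ) : WithTop ℕ) := by
        exact_mod_cast (by omega : m+2+b ≠ m+2+a)
      have hv1 : f b ((m+2+b : ℕ) : WithTop ℕ) = true := by
        simp only [hf]
        rw [if_neg (hfne b)]
        simp
      have hv2 : f a ((m+2+b : ℕ) : WithTop ℕ) = false := by
        simp only [hf]
        rw [if_neg (hfne b), if_neg h2]
      rw [hv1, hv2] at hcf
      exact Bool.false_ne_true hcf
    · -- adjacency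
      intro a ha
      have hpar' : a % 2 ≠ ((a+1) % k) % 2 := by
        rcases Nat.lt_or_ge (a+1) k with h | h
        · rw [Nat.mod_eq_of_lt h]; omega
        · have : a + 1 = k := by omega
          rw [this, Nat.mod_self]
          obtain ⟨t, ht⟩ := hke
          omega
      refine forced hreg hT ?_ (hpar _ _ hpar')
      intro j hj
      exact ⟨hflow _ j hj, hflow _ j hj⟩
  · -- odd cycle: u, v, then zigzag Q's
    set Q : ℕ → Pt := fun i j =>
      if j = X then (if i % 2 = 1 then !(u X) else u X)
      else if j = ((m+2+2*i : ℕ) : WithTop ℕ) then !(u j)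
      else if j = ((m+3+2*i : ℕ) : WithTop ℕ) then !(v j)
      else u j with hQ
    have hs1ne : ∀ i : ℕ, ((m+2+2*i : ℕ) : WithTop ℕ) ≠ X := by
      intro i; rw [hX]; exact_mod_cast (by omega : m+2+2*i ≠ m+1)
    have hs2ne : ∀ i : ℕ, ((m+3+2*i : ℕ) : WithTop ℕ) ≠ X := by
      intro i; rw [hX]; exact_mod_cast (by omega : m+3+2*i ≠ m+1)
    have hs12 : ∀ i i' : ℕ, ((m+2+2*i : ℕ) : WithTop ℕ) ≠ ((m+3+2*i' : ℕ) : WithTop ℕ) := by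
      intro i i'; exact_mod_cast (by omega : m+2+2*i ≠ m+3+2*i')
    have hQX : ∀ i : ℕ, Q i X = (if i % 2 = 1 then !(u X) else u X) := by
      intro i; simp [hQ]
    have hQlow : ∀ i : ℕ, ∀ j : WithTop ℕ, j < X → Q i j = false := by
      intro i j hj
      obtain ⟨p, rfl, hp⟩ := lt_coe_elim (hX ▸ hj)
      have h1 : ((p:ℕ) : WithTop ℕ) ≠ X := by
        rw [hX]; exact_mod_cast (by omega : p ≠ m+1)
      have h2 : ((p:ℕ) : WithTop ℕ) ≠ ((m+2+2*i : ℕ) : WithTop ℕ) := by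
        exact_mod_cast (by omega : p ≠ m+2+2*i)
      have h3 : ((p:ℕ) : WithTop ℕ) ≠ ((m+3+2*i : ℕ) : WithTop ℕ) := by
        exact_mod_cast (by omega : p ≠ m+3+2*i)
      simp only [hQ, if_neg h1, if_neg h2, if_neg h3]
      exact hulow _ hj
    -- inequality between u and Q i
    have huQ : ∀ i : ℕ, u ≠ Q i := by
      intro i h
      have := congrFun h ((m+2+2*i : ℕ) : WithTop ℕ)
      rw [show Q i ((m+2+2*i : ℕ) : WithTop ℕ) = !(u ((m+2+2*i : ℕ) : WithTop ℕ)) by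
        simp only [hQ]; rw [if_neg (hs1ne i)]; simp] at this
      exact (Bool.not_ne_self _) this.symm
    have hvQ : ∀ i : ℕ, v ≠ Q i := by
      intro i h
      have := congrFun h ((m+3+2*i : ℕ) : WithTop ℕ)
      have hne12 : ((m+3+2*i : ℕ) : WithTop ℕ) ≠ ((m+2+2*i : ℕ) : WithTop ℕ) :=
        (hs12 i i).symm
      rw [show Q i ((m+3+2*i : ℕ) : WithTop ℕ) = !(v ((m+3+2*i : ℕ) : WithTop ℕ)) by
        simp only [hQ]; rw [if_neg (hs2ne i), if_neg hne12]; simp] at this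
      exact (Bool.not_ne_self _) this.symm
    have hQQ : ∀ i i' : ℕ, i ≠ i' → Q i ≠ Q i' := by
      intro i i' hii h
      have := congrFun h ((m+2+2*i' : ℕ) : WithTop ℕ)
      have h2 : ((m+2+2*i' : ℕ) : WithTop ℕ) ≠ ((m+2+2*i : ℕ) : WithTop ℕ) := by
        exact_mod_cast (by omega : m+2+2*i' ≠ m+2+2*i)
      have h3 : ((m+2+2*i' : ℕ) : WithTop ℕ) ≠ ((m+3+2*i : ℕ) : WithTop ℕ) := by
        exact_mod_cast (by omega : m+2+2*i' ≠ m+3+2*i)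
      rw [show Q i ((m+2+2*i' : ℕ) : WithTop ℕ) = u ((m+2+2*i' : ℕ) : WithTop ℕ) by
        simp only [hQ]; rw [if_neg (hs1ne i'), if_neg h2, if_neg h3],
        show Q i' ((m+2+2*i' : ℕ) : WithTop ℕ) = !(u ((m+2+2*i' : ℕ) : WithTop ℕ)) by
        simp only [hQ]; rw [if_neg (hs1ne i')]; simp] at this
      exact (Bool.not_ne_self _) this.symm
    -- X-coordinate disagreements
    have hQpar : ∀ i i' : ℕ, i % 2 ≠ i' % 2 → Q i X ≠ Q i' X := by
      intro i i' hii
      rw [hQX, hQX]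
      rcases Nat.mod_two_eq_zero_or_one i with h | h <;>
        rcases Nat.mod_two_eq_zero_or_one i' with h' | h' <;>
        simp [h, h'] at hii ⊢ <;> omega
    have hQu : ∀ i : ℕ, i % 2 = 1 → Q i X ≠ u X := by
      intro i hi
      rw [hQX, if_pos hi]
      simp
    have hQv : ∀ i : ℕ, i % 2 = 1 → v X ≠ Q i X := by
      intro i hi
      rw [hQX, if_pos hi, ← huvX]
      simp
    -- the cycle function
    set f : ℕ → Pt := fun i => if i = 0 then u else if i = 1 then v else Q (i-1) with hfdef
    have hf0 : f 0 = u := by simp [hfdef]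
    have hf1 : f 1 = v := by simp [hfdef]
    have hfg : ∀ i : ℕ, 2 ≤ i → f i = Q (i-1) := by
      intro i hi
      simp only [hfdef]
      rw [if_neg (by omega), if_neg (by omega)]
    have hflow : ∀ i : ℕ, ∀ j : WithTop ℕ, j < X → f i j = false := by
      intro i j hj
      rcases Nat.lt_or_ge i 2 with h | h
      · interval_cases i
        · rw [hf0]; exact hulow j hj
        · rw [hf1]; exact hvlow j hj
      · rw [hfg i h]; exact hQlow _ j hj
    apply cycle_wrap hk f
    · -- injectivity
      have key : ∀ a b_ : ℕ, a < b_ → b_ < k → f a ≠ f b_ := by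
        intro a b_ hab hb
        rcases Nat.lt_or_ge b_ 2 with h2 | h2
        · interval_cases b_
          · omega
          · have : a = 0 := by omega
            rw [this, hf0, hf1]; exact huv
        · rw [hfg b_ h2]
          rcases Nat.lt_or_ge a 2 with ha2 | ha2
          · interval_cases a
            · rw [hf0]; exact huQ _
            · rw [hf1]; exact hvQ _
          · rw [hfg a ha2]
            exact hQQ _ _ (by omega)
      intro a ha b hb hab
      rcases Nat.lt_or_ge a b with h | h
      · exact key a b h hb
      · exact (key b a (by omega) ha).symm
    · -- adjacency
      intro a ha
      obtain ⟨t, ht⟩ := hko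
      rcases Nat.lt_or_ge (a+1) k with hlt | hge
      · rw [Nat.mod_eq_of_lt hlt]
        rcases Nat.lt_or_ge a 2 with h2 | h2
        · interval_cases a
          · rw [hf0, hf1]; exact hcuv
          · -- edge v - Q 1
            rw [hf1, hfg 2 (by omega)]
            refine forced hreg hT ?_ (hQv 1 (by omega))
            intro j hj
            exact ⟨hvlow j hj, hQlow _ j hj⟩
        · -- edge Q (a-1) - Q a
          rw [hfg a h2, hfg (a+1) (by omega)]
          have : a + 1 - 1 = a := by omega
          rw [this]
          refine forced hreg hT ?_ (hQpar _ _ (by omega))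
          intro j hj
          exact ⟨hQlow _ j hj, hQlow _ j hj⟩
      · -- wrap-around edge Q (k-2) - u
        have hak : a = k - 1 := by omega
        have : (a+1) % k = 0 := by
          have : a + 1 = k := by omega
          rw [this, Nat.mod_self]
        rw [this, hf0, hfg a (by omega)]
        refine forced hreg hT ?_ (hQu (a-1) (by omega))
        intro j hj
        exact ⟨hQlow _ j hj, hulow j hj⟩
end

section
/- Let c : [2^{ω+1}]² → ω+1 be Δ-regressive, and suppose that for every m < ω there is some length k_m ≥ 3 such that c has no monochromatic cycle of colour m and length k_m. Then for every m ≥ 1 and all distinct f, g ∈ 2^{ω+1} with Δ(f,g) ≥ m, one has c(f,g) ≥ m − 1. -/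
private lemma wt_le_lt_eq {a : WithTop ℕ} {n : ℕ} (h1 : (n : WithTop ℕ) ≤ a)
    (h2 : a < ((n + 1 : ℕ) : WithTop ℕ)) : a = (n : WithTop ℕ) := by
  cases a with
  | top => exact absurd h2 (by simp)
  | coe m =>
    have hm : (WithTop.some m : WithTop ℕ) = ((m : ℕ) : WithTop ℕ) := rfl
    rw [hm] at h1 h2 ⊢
    have h1' : n ≤ m := by exact_mod_cast h1
    have h2' : m < n + 1 := by exact_mod_cast h2
    have : m = n := by omega
    rw [this]

/-- auxiliary point: `f` with the bit at `tag` flipped and the bit at `N` set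
according to `fl`. -/
private def pt (f : WithTop ℕ → Bool) (N tag : WithTop ℕ) (fl : Bool) : WithTop ℕ → Bool :=
  fun p => if p = tag then !(f p) else if p = N then xor fl (f N) else f p

/-- tag positions: distinct finite positions above `n+1` avoiding `i`. -/
private def tagF (n : ℕ) (i : WithTop ℕ) (j : ℕ) : WithTop ℕ :=
  if ((n + 2 + 2 * j : ℕ) : WithTop ℕ) = i then ((n + 3 + 2 * j : ℕ) : WithTop ℕ)
  else ((n + 2 + 2 * j : ℕ) : WithTop ℕ)

/-- the vertices of the cycle. -/
private def Xfun (f g : WithTop ℕ → Bool) (n k : ℕ) (i : WithTop ℕ) (j : ℕ) :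
    WithTop ℕ → Bool :=
  if j = 0 then f
  else if j = 1 ∧ k % 2 = 1 then g
  else pt f ((n + 1 : ℕ) : WithTop ℕ) (tagF n i j) (decide (j % 2 ≠ k % 2))

private lemma key (c : (WithTop ℕ → Bool) → (WithTop ℕ → Bool) → WithTop ℕ)
    (hreg : ∀ x y i, x ≠ y → IsDelta x y i → 0 < i → c x y < i)
    (hnc : ∀ m : ℕ, ∃ k : ℕ, 3 ≤ k ∧
      ¬ ∃ x : ZMod k → (WithTop ℕ → Bool), Function.Injective x ∧
        ∀ j : ZMod k, c (x j) (x (j + 1)) = (m : WithTop ℕ)) :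
    ∀ n : ℕ, ∀ f g i, f ≠ g → IsDelta f g i → ((n + 1 : ℕ) : WithTop ℕ) ≤ i →
      (n : WithTop ℕ) ≤ c f g := by
  intro n
  induction n with
  | zero => intro f g i _ _ _; simp
  | succ n IH =>
    intro f g i hne hd hi
    by_contra hc
    push_neg at hc
    have hstep : ((n + 1 : ℕ) : WithTop ℕ) ≤ i :=
      le_trans (by exact_mod_cast (by omega : n + 1 ≤ n + 1 + 1)) hi
    have hcn : c f g = (n : WithTop ℕ) :=
      wt_le_lt_eq (IH f g i hne hd hstep) hc
    obtain ⟨k, hk3, hcyc⟩ := hnc n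
    haveI : NeZero k := ⟨by omega⟩
    haveI : Fact (1 < k) := ⟨by omega⟩
    apply hcyc
    set N : WithTop ℕ := ((n + 1 : ℕ) : WithTop ℕ) with hN
    have hNi : N < i :=
      lt_of_lt_of_le (by rw [hN]; exact_mod_cast (by omega : n + 1 < n + 1 + 1)) hi
    -- facts about tags
    have htN : ∀ j : ℕ, N < tagF n i j := by
      intro j
      by_cases h : ((n + 2 + 2 * j : ℕ) : WithTop ℕ) = i <;>
        simp only [tagF, h, if_true, if_false, hN] <;> exact_mod_cast (by omega)
    have htne : ∀ j : ℕ, tagF n i j ≠ i := by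
      intro j
      rw [tagF]
      split_ifs with h
      · rw [← h]
        exact_mod_cast (by omega : ¬ (n + 3 + 2 * j = n + 2 + 2 * j))
      · exact h
    have htinj : ∀ j l : ℕ, tagF n i j = tagF n i l → j = l := by
      intro j l h
      rw [tagF, tagF] at h
      split_ifs at h with h1 h2 h2
      · have h' : n + 3 + 2 * j = n + 3 + 2 * l := by exact_mod_cast h
        omega
      · have h' : n + 3 + 2 * j = n + 2 + 2 * l := by exact_mod_cast h
        omega
      · have h' : n + 2 + 2 * j = n + 3 + 2 * l := by exact_mod_cast h
        omega
      · have h' : n + 2 + 2 * j = n + 2 + 2 * l := by exact_mod_cast h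
        omega
    -- evaluation lemmas for pt
    have pt_low : ∀ j fl p, p < N → pt f N (tagF n i j) fl p = f p := by
      intro j fl p hp
      have h1 : p ≠ tagF n i j := ne_of_lt (hp.trans (htN j))
      rw [pt, if_neg h1, if_neg (ne_of_lt hp)]
    have pt_N : ∀ j fl, pt f N (tagF n i j) fl N = xor fl (f N) := by
      intro j fl
      rw [pt, if_neg (ne_of_lt (htN j)), if_pos rfl]
    have pt_tag : ∀ j fl, pt f N (tagF n i j) fl (tagF n i j) = !(f (tagF n i j)) := by
      intro j fl; rw [pt, if_pos rfl]
    have pt_i : ∀ j fl, pt f N (tagF n i j) fl i = f i := by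
      intro j fl
      rw [pt, if_neg (fun h => htne j h.symm), if_neg (ne_of_gt hNi)]
    have pt_other : ∀ j l fl, j ≠ l → pt f N (tagF n i j) fl (tagF n i l) = f (tagF n i l) := by
      intro j l fl hjl
      rw [pt, if_neg (fun h => hjl (htinj j l (h.symm))), if_neg (ne_of_gt (htN l))]
    -- facts about g
    have g_low : ∀ p, p ≤ N → g p = f p := by
      intro p hp
      exact (hd.2 p (lt_of_le_of_lt hp hNi)).symm
    -- the colour of any pair with Δ = n+1 is n
    have colour_n : ∀ x y : WithTop ℕ → Bool,
        (∀ p, p < N → x p = y p) → x N ≠ y N → c x y = (n : WithTop ℕ) := by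
      intro x y hlow hNne
      have hdxy : IsDelta x y N := ⟨hNne, hlow⟩
      have hxy : x ≠ y := fun h => hNne (by rw [h])
      have h1 : c x y < N :=
        hreg x y N hxy hdxy (by rw [hN]; exact_mod_cast Nat.succ_pos n)
      have h2 : (n : WithTop ℕ) ≤ c x y := IH x y N hxy hdxy (le_refl N)
      exact wt_le_lt_eq h2 h1
    -- the vertices
    set X : ℕ → (WithTop ℕ → Bool) := Xfun f g n k i with hX
    have X0 : X 0 = f := by simp [hX, Xfun]
    have Xpt : ∀ j : ℕ, j ≠ 0 → ¬(j = 1 ∧ k % 2 = 1) →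
        X j = pt f N (tagF n i j) (decide (j % 2 ≠ k % 2)) := by
      intro j h0 h1
      simp [hX, Xfun, h0, h1, hN]
    have X1odd : k % 2 = 1 → X 1 = g := by
      intro hk; simp [hX, Xfun, hk]
    have Xlow : ∀ j p, p < N → X j p = f p := by
      intro j p hp
      by_cases h0 : j = 0
      · rw [h0, X0]
      by_cases h1 : j = 1 ∧ k % 2 = 1
      · rw [h1.1, X1odd h1.2]; exact g_low p (le_of_lt hp)
      · rw [Xpt j h0 h1]; exact pt_low j _ p hp
    have XN : ∀ j : ℕ, 1 ≤ j → X j N = xor (decide (j % 2 ≠ k % 2)) (f N) := by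
      intro j hj
      by_cases h1 : j = 1 ∧ k % 2 = 1
      · rw [h1.1, X1odd h1.2, g_low N (le_refl N)]
        simp [h1.2]
      · rw [Xpt j (by omega) h1, pt_N]
    -- bit disagreements
    have xor_ne : ∀ (d1 d2 b : Bool), d1 ≠ d2 → xor d1 b ≠ xor d2 b := by decide
    have dec_succ : ∀ v : ℕ, decide (v % 2 ≠ k % 2) ≠ decide ((v + 1) % 2 ≠ k % 2) := by
      intro v
      have h2 : (v + 1) % 2 = 1 - v % 2 := by omega
      rcases Nat.mod_two_eq_zero_or_one v with hv | hv <;>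
        rcases Nat.mod_two_eq_zero_or_one k with hk | hk <;>
        simp [h2, hv, hk]
    -- injectivity of X on [0, k)
    have Xinj : ∀ u v : ℕ, u < k → v < k → X u = X v → u = v := by
      have main : ∀ u v : ℕ, v ≠ 0 → ¬(v = 1 ∧ k % 2 = 1) → u ≠ v → X u ≠ X v := by
        intro u v hv0 hv1 huv heq
        have hXv := Xpt v hv0 hv1
        by_cases hu0 : u = 0
        · have := congrFun heq (tagF n i v)
          rw [hu0, X0, hXv, pt_tag] at this
          simp at this
        by_cases hu1 : u = 1 ∧ k % 2 = 1
        · have := congrFun heq i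
          rw [hu1.1, X1odd hu1.2, hXv, pt_i] at this
          exact hd.1 (this.symm)
        · have := congrFun heq (tagF n i v)
          rw [Xpt u hu0 hu1, hXv, pt_tag, pt_other u v _ huv] at this
          simp at this
      intro u v hu hv heq
      by_contra huv
      by_cases hv0 : v = 0
      · subst hv0
        by_cases hu1 : u = 1 ∧ k % 2 = 1
        · have h1g : X u = g := by rw [hu1.1]; exact X1odd hu1.2
          exact hne (by rw [← X0, ← h1g]; exact heq.symm)
        · exact main 0 u (by omega) hu1 (fun h => huv h.symm) heq.symm
      by_cases hv1 : v = 1 ∧ k % 2 = 1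
      · have h1g : X v = g := by rw [hv1.1]; exact X1odd hv1.2
        by_cases hu0 : u = 0
        · subst hu0
          exact hne (by rw [← X0, ← h1g]; exact heq)
        by_cases hu1 : u = 1 ∧ k % 2 = 1
        · exact huv (by rw [hu1.1, hv1.1])
        · exact main v u (by omega) hu1 (fun h => huv h.symm) heq.symm
      · exact main u v hv0 hv1 huv heq
    -- the edges
    have edge : ∀ v : ℕ, v < k → c (X v) (X ((v + 1) % k)) = (n : WithTop ℕ) := by
      intro v hv
      by_cases hvk : v + 1 < k
      · rw [Nat.mod_eq_of_lt hvk]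
        by_cases hv0 : v = 0
        · subst hv0
          by_cases hk2 : k % 2 = 1
          · rw [X0, X1odd hk2]; exact hcn
          · refine colour_n _ _ (fun p hp => by rw [Xlow, Xlow] <;> exact hp) ?_
            rw [X0, XN 1 (le_refl 1)]
            have hk0 : k % 2 = 0 := by omega
            simp [hk0]
        · refine colour_n _ _ (fun p hp => by rw [Xlow, Xlow] <;> exact hp) ?_
          rw [XN v (by omega), XN (v + 1) (by omega)]
          exact xor_ne _ _ _ (dec_succ v)
      · have hveq : v + 1 = k := by omega
        rw [hveq, Nat.mod_self]
        refine colour_n _ _ (fun p hp => by rw [Xlow, Xlow] <;> exact hp) ?_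
        rw [X0, XN v (by omega)]
        have hpar : (v % 2 ≠ k % 2) := by omega
        simp [hpar]
    -- assemble the cycle
    refine ⟨fun j : ZMod k => X j.val, ?_, ?_⟩
    · intro a b hab
      exact ZMod.val_injective k
        (Xinj a.val b.val (ZMod.val_lt a) (ZMod.val_lt b) hab)
    · intro j
      have hval : (j + 1).val = (j.val + 1) % k := by
        rw [ZMod.val_add, ZMod.val_one]
      show c (X j.val) (X (j + 1).val) = (n : WithTop ℕ)
      rw [hval]
      exact edge j.val (ZMod.val_lt j)

/-- If `c` is a `Δ`-regressive colouring on `[2^{ω+1}]²` (the ordinal `ω+1` is modelled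
by `WithTop ℕ`) such that for every colour `m < ω` there is a length `k_m ≥ 3` with no
monochromatic cycle of colour `m` and length `k_m`, then for every `m ≥ 1` and distinct
`f, g` with `Δ(f,g) ≥ m` one has `c(f,g) ≥ m - 1`. -/
theorem stmt4 (c : (WithTop ℕ → Bool) → (WithTop ℕ → Bool) → WithTop ℕ)
    (hsymm : ∀ x y, c x y = c y x)
    (hreg : ∀ x y i, x ≠ y → IsDelta x y i → 0 < i → c x y < i)
    (hnc : ∀ m : ℕ, ∃ k : ℕ, 3 ≤ k ∧
      ¬ ∃ x : ZMod k → (WithTop ℕ → Bool), Function.Injective x ∧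
        ∀ j : ZMod k, c (x j) (x (j + 1)) = (m : WithTop ℕ)) :
    ∀ m : ℕ, 1 ≤ m → ∀ f g i, f ≠ g → IsDelta f g i → (m : WithTop ℕ) ≤ i →
      ((m - 1 : ℕ) : WithTop ℕ) ≤ c f g := by
  intro m hm f g i hne hd hi
  have h : ((m - 1 + 1 : ℕ) : WithTop ℕ) ≤ i := by
    have hmm : m - 1 + 1 = m := by omega
    rw [hmm]; exact hi
  exact key c hreg hnc (m - 1) f g i hne hd h
end

section
/- If μ < κ are infinite cardinals with 2^μ = 2^κ, then there is a colouring c : [2^κ]² → κ with no monochromatic odd cycles such that c(x,y) < max{Δ(x,y), μ} for all distinct x, y ∈ 2^κ. -/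
/-- `c` has a monochromatic odd cycle. -/
def HasMonoOddCycle {X C : Type*} (c : X → X → C) : Prop :=
  ∃ k : ℕ, 3 ≤ k ∧ Odd k ∧ ∃ x : ZMod k → X, Function.Injective x ∧
    ∃ m : C, ∀ j : ZMod k, c (x j) (x (j + 1)) = m

/-- A canonical choice of a disagreement point of `u` and `v`. -/
noncomputable def myD {μ : Type*} [Nonempty μ] (u v : μ → Bool) : μ :=
  @dite _ {m | u m ≠ v m}.Nonempty (Classical.propDecidable _) (fun h => h.choose)
    (fun _ => Classical.arbitrary μ)

lemma myD_symm {μ : Type*} [Nonempty μ] (u v : μ → Bool) : myD u v = myD v u := by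
  have hs : {m | u m ≠ v m} = {m | v m ≠ u m} := by
    ext m; exact ne_comm
  unfold myD
  rw [hs]

lemma myD_mem {μ : Type*} [Nonempty μ] {u v : μ → Bool} (h : u ≠ v) :
    u (myD u v) ≠ v (myD u v) := by
  have hne : {m | u m ≠ v m}.Nonempty := by
    obtain ⟨a, ha⟩ := Function.ne_iff.mp h
    exact ⟨a, ha⟩
  unfold myD
  rw [dif_pos hne]
  exact hne.choose_spec

lemma bool_parity {k : ℕ} (b : ZMod k → Bool) (hstep : ∀ j : ZMod k, b (j + 1) = !(b j)) :
    ∀ n : ℕ, b ((n : ZMod k)) = (if Even n then b 0 else !(b 0)) := by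
  intro n
  induction n with
  | zero => simp
  | succ n ih =>
    have hcast : ((n + 1 : ℕ) : ZMod k) = ((n : ℕ) : ZMod k) + 1 := by push_cast; ring
    rw [hcast, hstep, ih]
    by_cases he : Even n <;> simp [Nat.even_add_one, he]

/-- If `μ < κ` are infinite cardinals (here: `κ` is a well-ordered type which is an
initial ordinal, `μ` an infinite type with `#μ < #κ`) and `2^μ = 2^κ`, then there is an
almost `Δ`-regressive colouring on `[2^κ]²`, witnessed by `μ` (i.e.
`c(x,y) < max {Δ(x,y), μ}`, that is, `c(x,y) < Δ(x,y)` or `c(x,y) < μ` as an ordinal),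
with no monochromatic odd cycles. -/
theorem stmt5 {κ μ : Type u} [LinearOrder κ] [WellFoundedLT κ] [Infinite μ]
    (hseg : ∀ a : κ, Cardinal.mk (Set.Iio a) < Cardinal.mk κ)
    (hlt : Cardinal.mk μ < Cardinal.mk κ)
    (hpow : (2 : Cardinal) ^ Cardinal.mk μ = 2 ^ Cardinal.mk κ) :
    ∃ c : (κ → Bool) → (κ → Bool) → κ,
      (∀ x y, c x y = c y x) ∧
      (∀ x y i, x ≠ y → IsDelta x y i →
        c x y < i ∨ Cardinal.mk (Set.Iio (c x y)) < Cardinal.mk μ) ∧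
      ¬ HasMonoOddCycle c := by
  classical
  -- an injection e : (κ → Bool) ↪ (μ → Bool)
  have hcard : Cardinal.mk (κ → Bool) ≤ Cardinal.mk (μ → Bool) := by
    have h1 : Cardinal.mk (κ → Bool) = 2 ^ Cardinal.mk κ := by
      simp [Cardinal.mk_arrow]
    have h2 : Cardinal.mk (μ → Bool) = 2 ^ Cardinal.mk μ := by
      simp [Cardinal.mk_arrow]
    rw [h1, h2, hpow]
  obtain ⟨e⟩ := (Cardinal.le_def _ _).mp hcard
  -- an initial part of κ of size μ
  set T : Set κ := {a | Cardinal.mk (Set.Iio a) < Cardinal.mk μ} with hT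
  have hTle : Cardinal.mk μ ≤ Cardinal.mk T := by
    by_cases hU : ∀ a : κ, Cardinal.mk (Set.Iio a) < Cardinal.mk μ
    · have : T = Set.univ := Set.eq_univ_of_forall hU
      rw [this, Cardinal.mk_univ]
      exact hlt.le
    · push_neg at hU
      obtain ⟨a0, ha0⟩ := hU
      obtain ⟨a, ha, hmin⟩ := wellFounded_lt.has_min
        {a : κ | Cardinal.mk μ ≤ Cardinal.mk (Set.Iio a)} ⟨a0, ha0⟩
      have hTeq : T = Set.Iio a := by
        ext t
        constructor
        · intro ht
          by_contra hlt'
          have hat : a ≤ t := not_lt.mp hlt'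
          have : Cardinal.mk μ ≤ Cardinal.mk (Set.Iio t) :=
            le_trans (Set.mem_setOf.mp ha) (Cardinal.mk_le_mk_of_subset (Set.Iio_subset_Iio hat))
          exact absurd ht (not_lt.mpr this)
        · intro ht
          by_contra h'
          have h'' : ¬ Cardinal.mk (Set.Iio t) < Cardinal.mk μ := h'
          exact hmin t (by exact not_lt.mp h'') ht
      rw [hTeq]
      exact Set.mem_setOf.mp ha
  obtain ⟨gem⟩ := (Cardinal.le_def _ _).mp hTle
  set g : μ → κ := fun m => (gem m : κ) with hg
  have hginj : Function.Injective g := fun a b hab =>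
    gem.injective (Subtype.coe_injective hab)
  have hgmem : ∀ m : μ, Cardinal.mk (Set.Iio (g m)) < Cardinal.mk μ := fun m => (gem m).2
  refine ⟨fun x y => g (myD (e x) (e y)), ?_, ?_, ?_⟩
  · intro x y
    show g (myD (e x) (e y)) = g (myD (e y) (e x))
    rw [myD_symm]
  · intro x y i _ _
    exact Or.inr (hgmem _)
  · rintro ⟨k, hk3, hkodd, x, hxinj, m, hm'⟩
    have hm : ∀ j : ZMod k, g (myD (e (x j)) (e (x (j + 1)))) = m := hm'
    haveI : NeZero k := ⟨by omega⟩
    haveI : Fact (1 < k) := ⟨by omega⟩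
    have hne : ∀ j : ZMod k, e (x j) ≠ e (x (j + 1)) := by
      intro j hcontra
      have : x j = x (j + 1) := e.injective hcontra
      have hj : j = j + 1 := hxinj this
      have : (1 : ZMod k) = 0 := by
        have := hj.symm
        rwa [add_eq_left] at this
      exact one_ne_zero this
    set μ0 : μ := myD (e (x 0)) (e (x 1)) with hμ0
    have hDconst : ∀ j : ZMod k, myD (e (x j)) (e (x (j + 1))) = μ0 := by
      intro j
      apply hginj
      rw [hm j, ← hm 0, zero_add]
    set b : ZMod k → Bool := fun j => e (x j) μ0 with hb
    have hstep : ∀ j : ZMod k, b (j + 1) = !(b j) := by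
      intro j
      have h1 := myD_mem (hne j)
      rw [hDconst j] at h1
      revert h1
      simp only [hb]
      cases e (x j) μ0 <;> cases e (x (j + 1)) μ0 <;> simp
    have hkey := bool_parity b hstep k
    rw [ZMod.natCast_self] at hkey
    rw [if_neg (Nat.not_even_iff_odd.mpr hkodd)] at hkey
    exact absurd hkey (by cases b 0 <;> simp)
end

section
/- Suppose κ is an uncountable cardinal with 2^μ < 2^κ for all μ < κ, and c : [2^κ]² → κ satisfies c(x,y) < max{Δ(x,y), μ₀} for all distinct x,y, for some fixed μ₀ < κ. Then c has a monochromatic odd cycle. -/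
namespace Stmt6Aux

variable {V : Type*}

/-- `x 0, x 1, ..., x n` is a walk in the graph with adjacency `A`. -/
def IsWalkA (A : V → V → Prop) (n : ℕ) (x : ℕ → V) : Prop :=
  ∀ i, i < n → A (x i) (x (i + 1))

/-- The relation `A` has an odd cycle (injective, indexed by `ZMod k`). -/
def IsOddCyc (A : V → V → Prop) : Prop :=
  ∃ k : ℕ, 3 ≤ k ∧ Odd k ∧ ∃ y : ZMod k → V, Function.Injective y ∧
    ∀ j : ZMod k, A (y j) (y (j + 1))

/-- An odd closed walk yields an odd (injective) cycle. -/
lemma extract {A : V → V → Prop} (hirr : ∀ v, ¬ A v v) :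
    ∀ n, Odd n → ∀ x : ℕ → V, x n = x 0 → IsWalkA A n x → IsOddCyc A := by
  intro n
  induction n using Nat.strong_induction_on with
  | _ n ih =>
  intro hodd x hclosed hwalk
  by_cases hinj : ∀ s t, s < n → t < n → x s = x t → s = t
  · -- the walk itself is an injective cycle
    have hn3 : 3 ≤ n := by
      obtain ⟨m, hm⟩ := hodd
      rcases Nat.lt_or_ge n 3 with h | h
      · interval_cases n
        · omega
        · exact absurd (hclosed ▸ hwalk 0 (by omega)) (hirr _)
        · omega
      · exact h
    haveI : NeZero n := ⟨by omega⟩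
    refine ⟨n, hn3, hodd, fun j => x (ZMod.val j), ?_, ?_⟩
    · intro a b hab
      exact ZMod.val_injective n (hinj _ _ (ZMod.val_lt a) (ZMod.val_lt b) hab)
    · intro j
      have hjlt : (ZMod.val j) < n := ZMod.val_lt j
      haveI : Fact (1 < n) := ⟨by omega⟩
      have hval : (ZMod.val (j + 1)) = (ZMod.val j + 1) % n := by
        rw [ZMod.val_add, ZMod.val_one]
      show A (x (ZMod.val j)) (x (ZMod.val (j + 1)))
      rcases Nat.lt_or_ge (ZMod.val j + 1) n with h | h
      · rw [hval, Nat.mod_eq_of_lt h]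
        exact hwalk _ hjlt
      · have hj1 : ZMod.val j + 1 = n := by omega
        have : ZMod.val (j + 1) = 0 := by rw [hval, hj1, Nat.mod_self]
        rw [this, ← hclosed]
        have h2 := hwalk _ hjlt
        rwa [hj1] at h2
  · push_neg at hinj
    obtain ⟨s, t, hs, ht, heq, hne⟩ := hinj
    have key : ∀ a b : ℕ, a < b → b < n → x a = x b → IsOddCyc A := by
      intro a b hab hbn hxab
      set d := b - a with hd
      have hdpos : 0 < d := by omega
      have hdn : d ≤ n := by omega
      set e := n - d with he
      have hde : d + e = n := by omega
      -- walk 1 : closed walk at x a of length d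
      have hw1 : IsWalkA A d (fun t => x (a + t)) := by
        intro i hi
        have : a + i < n := by omega
        have h' := hwalk _ this
        simpa [Nat.add_assoc] using h'
      have hc1 : x (a + d) = x (a + 0) := by
        have : a + d = b := by omega
        simpa [this] using hxab.symm
      -- walk 2 : closed walk at x 0 of length e
      have hw2 : IsWalkA A e (fun t => if t ≤ a then x t else x (t + d)) := by
        intro i hi
        rcases Nat.lt_trichotomy i a with h | h | h
        · have h1 : i ≤ a := le_of_lt h
          have h2 : i + 1 ≤ a := h
          simp only [if_pos h1, if_pos h2]
          exact hwalk _ (by omega)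
        · subst h
          have h2 : ¬ (i + 1 ≤ i) := by omega
          simp only [if_pos le_rfl, if_neg h2]
          have : i + 1 + d = b + 1 := by omega
          rw [this, hxab]
          exact hwalk _ (by omega)
        · have h1 : ¬ (i ≤ a) := by omega
          have h2 : ¬ (i + 1 ≤ a) := by omega
          simp only [if_neg h1, if_neg h2]
          have := hwalk (i + d) (by omega)
          simpa [Nat.add_right_comm] using this
      have hc2 : (fun t => if t ≤ a then x t else x (t + d)) e
          = (fun t => if t ≤ a then x t else x (t + d)) 0 := by
        have h1 : ¬ (e ≤ a) := by omega
        have h2 : e + d = n := by omega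
        simp only [if_neg h1, if_pos (Nat.zero_le a), h2, hclosed]
      rcases Nat.even_or_odd d with hdev | hdodd
      · have heodd : Odd e := by
          rcases hdev with ⟨p, hp⟩
          rcases hodd with ⟨q, hq⟩
          exact ⟨q - p, by omega⟩
        exact ih e (by omega) heodd _ hc2 hw2
      · exact ih d (by omega) hdodd _ hc1 hw1
    rcases hne.lt_or_gt with h | h
    · exact key s t h ht heq
    · exact key t s h hs heq.symm

/-- Concatenation of walks. -/
lemma walk_concat {A : V → V → Prop} {u v w : V} {n₁ n₂ : ℕ} {x y : ℕ → V}
    (hx0 : x 0 = u) (hxn : x n₁ = v) (hx : IsWalkA A n₁ x)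
    (hy0 : y 0 = v) (hyn : y n₂ = w) (hy : IsWalkA A n₂ y) :
    ∃ z : ℕ → V, z 0 = u ∧ z (n₁ + n₂) = w ∧ IsWalkA A (n₁ + n₂) z := by
  refine ⟨fun t => if t < n₁ then x t else y (t - n₁), ?_, ?_, ?_⟩
  · rcases Nat.eq_zero_or_pos n₁ with h | h
    · subst h
      show (if (0:ℕ) < 0 then x 0 else y (0 - 0)) = u
      rw [if_neg (lt_irrefl 0), Nat.sub_zero, hy0, ← hxn]
      exact hx0
    · simp [h, hx0]
  · have h1 : ¬ (n₁ + n₂ < n₁) := by omega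
    simp [h1, hyn]
  · intro i hi
    rcases Nat.lt_trichotomy (i + 1) n₁ with h | h | h
    · simp only [if_pos (by omega : i < n₁), if_pos h]
      exact hx _ (by omega)
    · show A (if i < n₁ then x i else y (i - n₁))
          (if i + 1 < n₁ then x (i + 1) else y (i + 1 - n₁))
      rw [if_pos (by omega : i < n₁), if_neg (by omega : ¬ (i + 1 < n₁))]
      have e2 : y (i + 1 - n₁) = x (i + 1) := by rw [h, Nat.sub_self, hy0, ← hxn]
      rw [e2]
      exact hx _ (by omega)
    · simp only [if_neg (by omega : ¬ (i < n₁)), if_neg (by omega : ¬ (i + 1 < n₁))]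
      have h2 : i + 1 - n₁ = (i - n₁) + 1 := by omega
      rw [h2]
      exact hy _ (by omega)

/-- Reversal of walks. -/
lemma walk_reverse {A : V → V → Prop} (hsym : ∀ a b, A a b → A b a)
    {u v : V} {n : ℕ} {x : ℕ → V}
    (hx0 : x 0 = u) (hxn : x n = v) (hx : IsWalkA A n x) :
    ∃ z : ℕ → V, z 0 = v ∧ z n = u ∧ IsWalkA A n z := by
  refine ⟨fun t => x (n - t), by simpa, by simpa, ?_⟩
  intro i hi
  show A (x (n - i)) (x (n - (i + 1)))
  have h1 : n - i = (n - (i+1)) + 1 := by omega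
  rw [h1]
  exact hsym _ _ (hx _ (by omega))

/-- A relation with no odd closed walk admits a proper 2-coloring. -/
lemma twocolor {A : V → V → Prop} (hsym : ∀ a b, A a b → A b a)
    (hno : ∀ n, Odd n → ∀ x : ℕ → V, x n = x 0 → ¬ IsWalkA A n x) :
    ∃ f : V → Bool, ∀ a b, A a b → f a ≠ f b := by
  classical
  set R : V → V → Prop := fun u v => ∃ n x, x 0 = u ∧ x n = v ∧ IsWalkA A n x with hR
  have hrefl : ∀ u, R u u := fun u => ⟨0, fun _ => u, rfl, rfl, fun i hi => by omega⟩
  have hsymm : ∀ {u v}, R u v → R v u := by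
    rintro u v ⟨n, x, h0, hn, hw⟩
    obtain ⟨z, hz0, hzn, hzw⟩ := walk_reverse hsym h0 hn hw
    exact ⟨n, z, hz0, hzn, hzw⟩
  have htrans : ∀ {u v w}, R u v → R v w → R u w := by
    rintro u v w ⟨n₁, x, h0, hn, hw⟩ ⟨n₂, y, g0, gn, gw⟩
    obtain ⟨z, hz0, hzn, hzw⟩ := walk_concat h0 hn hw g0 gn gw
    exact ⟨n₁ + n₂, z, hz0, hzn, hzw⟩
  letI s : Setoid V := ⟨R, ⟨hrefl, hsymm, htrans⟩⟩
  set rep : V → V := fun v => (Quotient.mk s v).out with hrep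
  have hreach : ∀ v, R (rep v) v := by
    intro v
    have h := Quotient.out_eq (Quotient.mk s v)
    exact Quotient.exact h
  have hrepeq : ∀ a b, A a b → rep a = rep b := by
    intro a b hab
    have : R a b := ⟨1, fun t => if t = 0 then a else b, by simp, by simp, by
      intro i hi
      have : i = 0 := by omega
      simp [this, hab]⟩
    simp only [hrep]
    rw [Quotient.sound this]
  refine ⟨fun v => if ∃ n x, Odd n ∧ x 0 = rep v ∧ x n = v ∧ IsWalkA A n x
      then true else false, ?_⟩
  intro a b hab heq
  -- get walks from rep to a and to b, of equal parity
  have key : ∃ n₁ : ℕ, ∃ n₂ : ℕ, ∃ x y : ℕ → V, (Odd n₁ ↔ Odd n₂) ∧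
      x 0 = rep a ∧ x n₁ = a ∧ IsWalkA A n₁ x ∧
      y 0 = rep b ∧ y n₂ = b ∧ IsWalkA A n₂ y := by
    by_cases ha : ∃ n x, Odd n ∧ x 0 = rep a ∧ x n = a ∧ IsWalkA A n x
    · have hb : ∃ n x, Odd n ∧ x 0 = rep b ∧ x n = b ∧ IsWalkA A n x := by
        by_contra hb
        simp only [if_pos ha, if_neg hb] at heq
        exact Bool.noConfusion heq
      obtain ⟨n₁, x, hodd1, h1, h2, h3⟩ := ha
      obtain ⟨n₂, y, hodd2, g1, g2, g3⟩ := hb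
      exact ⟨n₁, n₂, x, y, by tauto, h1, h2, h3, g1, g2, g3⟩
    · have hb : ¬ ∃ n x, Odd n ∧ x 0 = rep b ∧ x n = b ∧ IsWalkA A n x := by
        by_contra hb
        simp only [if_pos hb, if_neg ha] at heq
        exact Bool.noConfusion heq
      obtain ⟨n₁, x, h1, h2, h3⟩ := hreach a
      obtain ⟨n₂, y, g1, g2, g3⟩ := hreach b
      push_neg at ha hb
      have hne1 : ¬ Odd n₁ := fun h => ha n₁ x h h1 h2 h3
      have hne2 : ¬ Odd n₂ := fun h => hb n₂ y h g1 g2 g3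
      exact ⟨n₁, n₂, x, y, by tauto, h1, h2, h3, g1, g2, g3⟩
  obtain ⟨n₁, n₂, x, y, hpar, h1, h2, h3, g1, g2, g3⟩ := key
  -- walk of length 1 from a to b
  have hedge : IsWalkA A 1 (fun t => if t = 0 then a else b) := by
    intro i hi
    have : i = 0 := by omega
    simp [this, hab]
  have he0 : (fun t : ℕ => if t = 0 then a else b) 0 = a := by simp
  have he1 : (fun t : ℕ => if t = 0 then a else b) 1 = b := by simp
  obtain ⟨z, hz0, hzn, hzw⟩ := walk_concat h1 h2 h3 he0 he1 hedge
  obtain ⟨y', hy'0, hy'n, hy'w⟩ := walk_reverse hsym g1 g2 g3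
  rw [← hrepeq a b hab] at hy'n
  obtain ⟨w, hw0, hwn, hww⟩ := walk_concat hz0 hzn hzw hy'0 hy'n hy'w
  have hoddtot : Odd (n₁ + 1 + n₂) := by
    rcases Nat.even_or_odd n₁ with h | h
    · have : ¬ Odd n₂ := fun hh => (Nat.not_odd_iff_even.mpr h) (hpar.mpr hh)
      rw [Nat.not_odd_iff_even] at this
      rcases h with ⟨p, hp⟩; rcases this with ⟨q, hq⟩
      exact ⟨p + q, by omega⟩
    · have h2 := hpar.mp h
      rcases h with ⟨p, hp⟩; rcases h2 with ⟨q, hq⟩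
      exact ⟨p + q + 1, by omega⟩
  exact hno _ hoddtot w (by rw [hwn, hw0]) hww

end Stmt6Aux

namespace Stmt6Aux

lemma exists_delta {κ : Type u} [LinearOrder κ] [WellFoundedLT κ] {x y : κ → Bool}
    (h : x ≠ y) : ∃ i, IsDelta x y i := by
  have hne : {i : κ | x i ≠ y i}.Nonempty := by
    by_contra h'
    push_neg at h'
    exact h (funext fun i => by
      by_contra hi
      exact (Set.eq_empty_iff_forall_notMem.mp h' i) hi)
  refine ⟨(IsWellFounded.wf (r := ((· < ·) : κ → κ → Prop))).min _ hne,
    (IsWellFounded.wf).min_mem _ hne, ?_⟩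
  intro j hj
  by_contra hc
  exact (IsWellFounded.wf).not_lt_min {i : κ | x i ≠ y i} hc hj

end Stmt6Aux


/-- Suppose `κ` is an uncountable cardinal (a well-ordered uncountable type which is
an initial ordinal) with `2^μ < 2^κ` for all cardinals `μ < κ`, and
`c : [2^κ]² → κ` satisfies `c(x,y) < max {Δ(x,y), μ₀}` for a fixed `μ₀ < κ`
(i.e. `c(x,y) < Δ(x,y)` or `c(x,y) < μ₀`). Then `c` has a monochromatic odd cycle. -/
theorem stmt6 {κ : Type u} [LinearOrder κ] [WellFoundedLT κ] [Uncountable κ]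
    (hseg : ∀ a : κ, Cardinal.mk (Set.Iio a) < Cardinal.mk κ)
    (hpow : ∀ μ : Cardinal.{u}, μ < Cardinal.mk κ → (2 : Cardinal) ^ μ < (2 : Cardinal) ^ Cardinal.mk κ)
    (c : (κ → Bool) → (κ → Bool) → κ) (hsymm : ∀ x y, c x y = c y x)
    (μ₀ : κ)
    (hreg : ∀ x y i, x ≠ y → IsDelta x y i → c x y < i ∨ c x y < μ₀) :
    HasMonoOddCycle c := by
  by_contra hno
  -- Step 1: proper 2-colorings of each color class
  have hcol : ∀ m : κ, ∃ f : (κ → Bool) → Bool,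
      ∀ a b, (a ≠ b ∧ c a b = m) → f a ≠ f b := by
    intro m
    apply Stmt6Aux.twocolor
    · rintro a b ⟨h1, h2⟩
      exact ⟨h1.symm, (hsymm a b) ▸ h2⟩
    · intro n hodd x hc hw
      refine hno ?_
      obtain ⟨k, hk3, hkodd, y, hyinj, hcyc⟩ :=
        Stmt6Aux.extract (A := fun a b => a ≠ b ∧ c a b = m)
          (fun v hv => hv.1 rfl) n hodd x hc hw
      exact ⟨k, hk3, hkodd, y, hyinj, m, fun j => (hcyc j).2⟩
  choose f hf using hcol
  set F : (κ → Bool) → (κ → Bool) := fun a i => f i a with hFdef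
  have hFne : ∀ a b, a ≠ b → F a (c a b) ≠ F b (c a b) :=
    fun a b h => hf (c a b) a b ⟨h, rfl⟩
  -- Step 2: descent
  have descent : ∀ i : κ, ∀ a b, a ≠ b → IsDelta a b i →
      ∃ n : ℕ, ∃ j : κ, j < μ₀ ∧ F^[n] a j ≠ F^[n] b j := by
    intro i
    induction i using WellFoundedLT.induction with
    | _ i ih =>
    intro a b hab hdel
    have hFab : F a ≠ F b := fun h => hFne a b hab (by rw [h])
    obtain ⟨i', hdel'⟩ := Stmt6Aux.exists_delta hFab
    have hle : i' ≤ c a b := by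
      by_contra hlt
      push_neg at hlt
      exact hFne a b hab (hdel'.2 _ hlt)
    rcases hreg a b i hab hdel with h | h
    · -- c a b < i, recurse
      obtain ⟨n, j, hj, hne⟩ := ih i' (lt_of_le_of_lt hle h) (F a) (F b) hFab hdel'
      refine ⟨n + 1, j, hj, ?_⟩
      rwa [Function.iterate_succ_apply, Function.iterate_succ_apply]
    · exact ⟨1, i', lt_of_le_of_lt hle h, by simpa using hdel'.1⟩
  -- Step 3: injection into a small set
  set Φ : (κ → Bool) → (ℕ → (Set.Iio μ₀ → Bool)) :=
    fun a n j => F^[n] a j.1 with hΦdef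
  have hΦ : Function.Injective Φ := by
    intro a b h
    by_contra hab
    obtain ⟨i, hi⟩ := Stmt6Aux.exists_delta hab
    obtain ⟨n, j, hj, hne⟩ := descent i a b hab hi
    exact hne (congrFun (congrFun h n) ⟨j, hj⟩)
  -- Step 4: cardinality contradiction
  have h1 : Cardinal.mk (κ → Bool) = (2 : Cardinal) ^ Cardinal.mk κ := by
    rw [Cardinal.mk_arrow]
    simp [Cardinal.mk_bool]
  have h2 : Cardinal.mk (ℕ → (Set.Iio μ₀ → Bool))
      = (2 : Cardinal) ^ (Cardinal.mk (Set.Iio μ₀) * Cardinal.aleph0) := by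
    rw [Cardinal.mk_arrow, Cardinal.mk_arrow]
    simp [Cardinal.mk_bool, Cardinal.power_mul]
  have hsmall : Cardinal.mk (Set.Iio μ₀) * Cardinal.aleph0 < Cardinal.mk κ :=
    Cardinal.mul_lt_of_lt (le_of_lt ((Cardinal.aleph0_lt_mk (α := κ)))) (hseg μ₀)
      ((Cardinal.aleph0_lt_mk (α := κ)))
  have hle := Cardinal.mk_le_of_injective hΦ
  rw [h1, h2] at hle
  exact absurd (lt_of_le_of_lt hle (hpow _ hsmall)) (lt_irrefl _)
end

section
/- Suppose κ is an almost ineffable cardinal (i.e., every regressive function f : [κ]² → κ, meaning f(α,β) < α for 0 < α < β, has a monochromatic set of cardinality κ) and c : [2^κ]² → κ is almost Δ-regressive. Then there is a c-monochromatic subset of 2^κ of size κ. -/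
/-- Suppose `κ` is an almost ineffable cardinal (an uncountable well-ordered type which
is an initial ordinal such that every regressive `f : [κ]² → κ` has a monochromatic set
of cardinality `κ`), and `c : [2^κ]² → κ` is almost `Δ`-regressive (for some `μ₀ < κ`,
`c(x,y) < max {Δ(x,y), μ₀}` for all distinct `x, y`). Then there is a `c`-monochromatic
subset of `2^κ` of size `κ`. -/
theorem stmt7 {κ : Type u} [LinearOrder κ] [WellFoundedLT κ] [Uncountable κ]
    (hseg : ∀ a : κ, Cardinal.mk (Set.Iio a) < Cardinal.mk κ)
    (hineff : ∀ f : κ → κ → κ, (∀ a b : κ, a < b → ¬ IsMin a → f a b < a) →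
      ∃ A : Set κ, Cardinal.mk A = Cardinal.mk κ ∧
        ∃ m : κ, ∀ a ∈ A, ∀ b ∈ A, a < b → f a b = m)
    (c : (κ → Bool) → (κ → Bool) → κ) (hsymm : ∀ x y, c x y = c y x)
    (μ₀ : κ)
    (hreg : ∀ x y i, x ≠ y → IsDelta x y i → c x y < i ∨ c x y < μ₀) :
    ∃ Y : Set (κ → Bool), Cardinal.mk Y = Cardinal.mk κ ∧
      ∃ m : κ, ∀ x ∈ Y, ∀ y ∈ Y, x ≠ y → c x y = m := by
  classical
  -- a minimum element of κ
  obtain ⟨b₀, -, hb₀⟩ := (IsWellFounded.wf : WellFounded ((· < ·) : κ → κ → Prop)).has_min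
    Set.univ ⟨Classical.arbitrary κ, trivial⟩
  have hb₀le : ∀ y : κ, b₀ ≤ y := fun y => not_lt.1 (hb₀ y trivial)
  set x : κ → κ → Bool := fun a i => decide (i < a) with hx
  have hdelta : ∀ a b : κ, a < b → IsDelta (x a) (x b) a := by
    intro a b hab
    refine ⟨by simp [hx, hab], ?_⟩
    intro j hj
    simp [hx, hj, hj.trans hab]
  have hxne : ∀ a b : κ, a < b → x a ≠ x b := by
    intro a b hab h
    have := congrFun h a
    simp [hx, hab] at this
  have hxinj : Function.Injective x := by
    intro a b h
    by_contra hne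
    rcases lt_or_gt_of_ne hne with h' | h'
    · exact hxne a b h' h
    · exact hxne b a h' h.symm
  have hclt : ∀ a b : κ, μ₀ < a → a < b → c (x a) (x b) < a := by
    intro a b hμ hab
    rcases hreg (x a) (x b) a (hxne a b hab) (hdelta a b hab) with h | h
    · exact h
    · exact h.trans hμ
  set f : κ → κ → κ := fun a b => if μ₀ < a then c (x a) (x b) else b₀ with hf
  have hfreg : ∀ a b : κ, a < b → ¬ IsMin a → f a b < a := by
    intro a b hab hmin
    by_cases hμ : μ₀ < a
    · simpa [hf, hμ] using hclt a b hμ hab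
    · have hlt : b₀ < a :=
        lt_of_le_of_ne (hb₀le a) (fun h => hmin (fun d _ => h ▸ hb₀le d))
      simpa [hf, hμ]
  obtain ⟨A, hA, m, hm⟩ := hineff f hfreg
  set A' : Set κ := {a ∈ A | μ₀ < a} with hA'
  have hκinf : Cardinal.aleph0 ≤ Cardinal.mk κ := Cardinal.aleph0_le_mk κ
  have hIic : Cardinal.mk (Set.Iic μ₀) < Cardinal.mk κ := by
    have h1 : Set.Iic μ₀ = insert μ₀ (Set.Iio μ₀) := by
      ext t; simp [le_iff_lt_or_eq]
    rw [h1]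
    calc Cardinal.mk (insert μ₀ (Set.Iio μ₀) : Set κ)
        ≤ Cardinal.mk (Set.Iio μ₀) + 1 := Cardinal.mk_insert_le
      _ < Cardinal.mk κ := Cardinal.add_lt_of_lt hκinf (hseg μ₀)
          (lt_of_lt_of_le Cardinal.one_lt_aleph0 hκinf)
  have hA'card : Cardinal.mk A' = Cardinal.mk κ := by
    refine le_antisymm (Cardinal.mk_set_le A') ?_
    by_contra hlt
    push_neg at hlt
    have hsub : A ⊆ A' ∪ Set.Iic μ₀ := by
      intro a ha
      by_cases hμ : μ₀ < a
      · exact Or.inl ⟨ha, hμ⟩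
      · exact Or.inr (not_lt.1 hμ)
    have : Cardinal.mk A ≤ Cardinal.mk A' + Cardinal.mk (Set.Iic μ₀) :=
      (Cardinal.mk_le_mk_of_subset hsub).trans (Cardinal.mk_union_le _ _)
    have : Cardinal.mk A < Cardinal.mk κ :=
      this.trans_lt (Cardinal.add_lt_of_lt hκinf hlt hIic)
    exact absurd hA this.ne
  refine ⟨x '' A', ?_, m, ?_⟩
  · rw [Cardinal.mk_image_eq hxinj, hA'card]
  · rintro _ ⟨a, ha, rfl⟩ _ ⟨b, hb, rfl⟩ hne
    have hab : a ≠ b := fun h => hne (by rw [h])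
    rcases lt_or_gt_of_ne hab with h' | h'
    · have := hm a ha.1 b hb.1 h'
      simpa [hf, ha.2] using this
    · have := hm b hb.1 a ha.1 h'
      rw [hsymm]
      simpa [hf, hb.2] using this
end

section
/- Let κ be an uncountable regular cardinal and let c : [2^κ]² → κ be almost Δ-regressive and κ-Borel (with 2^κ carrying the <κ-supported product topology and κ the discrete topology). Then there is a c-monochromatic subset of 2^κ of size κ. -/
/-- The `<κ`-supported product topology on `2^κ`, generated by the basic open sets
`N_s = {x | s ⊆ x}` for `s ∈ 2^{<κ}` (i.e. by sets determined by an initial segment). -/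
def kTop (κ : Type*) [LinearOrder κ] : TopologicalSpace (κ → Bool) :=
  TopologicalSpace.generateFrom
    {U | ∃ (a : κ) (y : κ → Bool), U = {x | ∀ i, i < a → x i = y i}}

/-- The `κ`-Borel subsets of `2^κ × 2^κ` (with the product of the `<κ`-supported
topologies): the smallest family containing the open sets and closed under
complements and unions of size `κ`. -/
inductive KBorel2 (κ : Type*) [LinearOrder κ] : Set ((κ → Bool) × (κ → Bool)) → Prop
  | of_open (U : Set ((κ → Bool) × (κ → Bool))) :
      @IsOpen _ (@instTopologicalSpaceProd _ _ (kTop κ) (kTop κ)) U → KBorel2 κ U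
  | compl (s : Set ((κ → Bool) × (κ → Bool))) : KBorel2 κ s → KBorel2 κ sᶜ
  | iUnion (f : κ → Set ((κ → Bool) × (κ → Bool))) :
      (∀ i, KBorel2 κ (f i)) → KBorel2 κ (⋃ i, f i)

open Cardinal Set
set_option linter.unusedSectionVars false

universe u
namespace S9
variable {κ : Type u} [LinearOrder κ] [WellFoundedLT κ]

/-- the basic cone determined by condition `(a,z)` -/
def cone (a : κ) (z : κ → Bool) : Set (κ → Bool) := {x | ∀ i, i < a → x i = z i}

lemma self_mem_cone (a : κ) (z : κ → Bool) : z ∈ cone a z := fun _ _ => rfl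

lemma cone_eq_of_mem {a : κ} {z x : κ → Bool} (hx : x ∈ cone a z) : cone a x = cone a z := by
  ext y; constructor <;> intro hy i hi <;> rw [hy i hi] <;> [exact hx i hi; exact (hx i hi).symm]

lemma cone_anti {a b : κ} (hab : a ≤ b) (z : κ → Bool) : cone b z ⊆ cone a z :=
  fun _ hx i hi => hx i (lt_of_lt_of_le hi hab)

lemma cone_pair {a b : κ} {z w x : κ → Bool} (h1 : x ∈ cone a z) (h2 : x ∈ cone b w) :
    cone (max a b) x ⊆ cone a z ∩ cone b w := by
  intro y hy
  constructor
  · intro i hi; rw [hy i (lt_of_lt_of_le hi (le_max_left a b))]; exact h1 i hi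
  · intro i hi; rw [hy i (lt_of_lt_of_le hi (le_max_right a b))]; exact h2 i hi

section Card
variable [Uncountable κ]
variable (hseg : ∀ a : κ, #(Set.Iio a) < #κ) (hreg' : (#κ).IsRegular)
include hseg hreg'

omit hreg' in
lemma small_Iic (a : κ) : #(Set.Iic a) < #κ := by
  have h1 : (Set.Iic a) ⊆ (Set.Iio a) ∪ {a} := by
    intro x hx; rcases lt_or_eq_of_le (hx : x ≤ a) with h | h
    · exact Or.inl h
    · exact Or.inr (by simp [h])
  refine lt_of_le_of_lt (mk_le_mk_of_subset h1) ?_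
  refine lt_of_le_of_lt (mk_union_le _ _) ?_
  have : #({a} : Set κ) = 1 := mk_singleton a
  rw [this]
  exact Cardinal.add_lt_of_lt (aleph0_lt_mk (α := κ)).le (hseg a)
    (lt_of_lt_of_le one_lt_aleph0 (aleph0_lt_mk (α := κ)).le)

/-- subsets of size < κ are bounded -/
lemma bdd_of_small {S : Set κ} (hS : #S < #κ) : ∃ b, ∀ s ∈ S, s ≤ b := by
  by_contra h
  push_neg at h
  have hcov : (Set.univ : Set κ) = ⋃ s : S, Set.Iic (s : κ) := by
    ext x; simp only [Set.mem_univ, true_iff, Set.mem_iUnion]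
    obtain ⟨s, hs, hxs⟩ := h x
    exact ⟨⟨s, hs⟩, le_of_lt hxs⟩
  have : #κ ≤ Cardinal.sum fun s : S => #(Set.Iic (s : κ)) := by
    calc #κ = #(Set.univ : Set κ) := mk_univ.symm
    _ = #(⋃ s : S, Set.Iic (s : κ)) := by rw [hcov]
    _ ≤ _ := mk_iUnion_le_sum_mk
  exact absurd this (not_le.mpr (Cardinal.sum_lt_of_isRegular hreg' hS
    fun s => small_Iic hseg (s : κ)))

omit hreg' in
lemma exists_gt (a : κ) : ∃ b, a < b := by
  by_contra h
  push_neg at h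
  have : #κ ≤ #(Set.Iic a) := by
    rw [← mk_univ (α := κ)]
    exact mk_le_mk_of_subset (fun x _ => h x)
  exact absurd this (not_le.mpr (small_Iic hseg a))

omit [Uncountable κ] hseg hreg' in
lemma exists_lub (S : Set κ) (hb : ∃ b, ∀ s ∈ S, s ≤ b) :
    ∃ L, (∀ s ∈ S, s ≤ L) ∧ ∀ b, (∀ s ∈ S, s ≤ b) → L ≤ b := by
  have hne : {b | ∀ s ∈ S, s ≤ b}.Nonempty := hb
  refine ⟨(IsWellFounded.wf (r := ((· < ·) : κ → κ → Prop))).min _ hne,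
    (IsWellFounded.wf).min_mem _ hne, fun b hbub => ?_⟩
  by_contra hlt
  exact (IsWellFounded.wf (r := ((· < ·) : κ → κ → Prop))).not_lt_min {b | ∀ s ∈ S, s ≤ b} (x := b) hbub (not_le.mp hlt)

omit [Uncountable κ] hseg hreg' in
lemma surj_of_card_le {ι : Type u} [Nonempty ι] (h : #ι ≤ #κ) :
    ∃ f : κ → ι, Function.Surjective f := by
  obtain ⟨e⟩ := (Cardinal.le_def _ _).mp h
  exact ⟨Function.invFun e, Function.invFun_surjective e.injective⟩

omit hseg hreg' in
lemma card_prod_le {ι : Type u} (h : #ι ≤ #κ) : #(ι × κ) ≤ #κ := by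
  calc #(ι × κ) = #ι * #κ := (mk_prod _ _).trans (by rw [Cardinal.lift_id, Cardinal.lift_id])
  _ ≤ #κ * #κ := mul_le_mul_left h _
  _ = #κ := Cardinal.mul_eq_self (aleph0_lt_mk (α := κ)).le

end Card

section Cat
variable [Uncountable κ]

/-- `S` is dense below the condition `(a,z)`. -/
def DenseB (a : κ) (z : κ → Bool) (S : Set (κ → Bool)) : Prop :=
  ∀ b w, cone b w ⊆ cone a z → ∃ c v, cone c v ⊆ cone b w ∧ cone c v ⊆ S

def DenseG (S : Set (κ → Bool)) : Prop :=
  ∀ b w, ∃ c v, cone c v ⊆ cone b w ∧ cone c v ⊆ S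

lemma DenseG.denseB {S : Set (κ → Bool)} (h : DenseG S) (a : κ) (z : κ → Bool) :
    DenseB a z S := fun b w _ => h b w

lemma DenseB.mono {a a' : κ} {z z' : κ → Bool} {S : Set (κ → Bool)}
    (h : DenseB a z S) (hsub : cone a' z' ⊆ cone a z) : DenseB a' z' S :=
  fun b w hbw => h b w (hbw.trans hsub)

/-- the data needed at step `i` of the generic-point construction -/
def Phi (a : κ) (z : κ → Bool) (D : κ → Set (κ → Bool)) (i : κ) (h : κ → κ × (κ → Bool)) :
    Set (κ × (κ → Bool)) :=
  { s | i < s.1 ∧ cone s.1 s.2 ⊆ D i ∧ cone s.1 s.2 ⊆ cone a z ∧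
      ∀ j, j < i → (h j).1 < s.1 ∧ ∀ t, t < (h j).1 → s.2 t = (h j).2 t }

lemma Phi_congr {a : κ} {z : κ → Bool} {D : κ → Set (κ → Bool)} {i : κ}
    {h h' : κ → κ × (κ → Bool)} (hh : ∀ j, j < i → h j = h' j) :
    Phi a z D i h = Phi a z D i h' := by
  unfold Phi; ext s
  exact ⟨fun ⟨h1, h2, h3, h4⟩ => ⟨h1, h2, h3, fun j hj => hh j hj ▸ h4 j hj⟩,
    fun ⟨h1, h2, h3, h4⟩ => ⟨h1, h2, h3, fun j hj => (hh j hj).symm ▸ h4 j hj⟩⟩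

variable (hseg : ∀ a : κ, #(Set.Iio a) < #κ) (hreg' : (#κ).IsRegular)
include hseg hreg'

/-- taking the union of a `<κ`-chain of conditions -/
lemma union_cond (i : κ) (z : κ → Bool) (len : κ → κ) (w : κ → κ → Bool)
    (hch : ∀ j k, j < k → k < i → len j < len k ∧ ∀ t, t < len j → w k t = w j t) :
    ∃ (L : κ) (W : κ → Bool), (∀ j, j < i → len j ≤ L ∧ ∀ t, t < len j → W t = w j t) ∧
      (∀ b, (∀ j, j < i → len j ≤ b) → L ≤ b) ∧
      (∀ t, (¬ ∃ j, j < i ∧ t < len j) → W t = z t) := by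
  classical
  have hbd : ∃ b, ∀ s ∈ len '' (Set.Iio i), s ≤ b := by
    apply bdd_of_small hseg hreg'
    exact lt_of_le_of_lt mk_image_le (hseg i)
  obtain ⟨L, hub, hleast⟩ := exists_lub (len '' (Set.Iio i)) hbd
  refine ⟨L, fun t => if ht : ∃ j, j < i ∧ t < len j then w ht.choose t else z t,
    fun j hj => ⟨hub _ ⟨j, hj, rfl⟩, fun t ht => ?_⟩,
    fun b hb => hleast b (by rintro s ⟨j, hj, rfl⟩; exact hb j hj),
    fun t ht => dif_neg ht⟩
  have hex : ∃ j', j' < i ∧ t < len j' := ⟨j, hj, ht⟩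
  show (if ht : ∃ j, j < i ∧ t < len j then w ht.choose t else z t) = w j t
  rw [dif_pos hex]
  obtain ⟨hj', ht'⟩ := hex.choose_spec
  rcases lt_trichotomy hex.choose j with h | h | h
  · exact ((hch _ _ h hj).2 t ht').symm
  · rw [h]
  · exact (hch _ _ h hj').2 t ht

/-- the `κ`-Baire category theorem: generic points exist -/
lemma generic (a : κ) (z : κ → Bool) (D : κ → Set (κ → Bool))
    (hD : ∀ i, DenseB a z (D i)) : ∃ x, x ∈ cone a z ∧ ∀ i, x ∈ D i := by
  classical
  have wf : WellFounded ((· < ·) : κ → κ → Prop) := IsWellFounded.wf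
  let F : ∀ i : κ, (∀ j, j < i → κ × (κ → Bool)) → κ × (κ → Bool) := fun i ih =>
    if hx : (Phi a z D i (fun j => if hj : j < i then ih j hj else (a, z))).Nonempty
    then hx.some else (a, z)
  let g : κ → κ × (κ → Bool) := wf.fix F
  have hg : ∀ i, g i = if hx : (Phi a z D i
        (fun j => if hj : j < i then g j else (a, z))).Nonempty
      then hx.some else (a, z) := fun i => wf.fix_eq F i
  -- main invariant
  have gspec : ∀ i, g i ∈ Phi a z D i g := by
    intro i
    induction i using wf.induction with
    | _ i IH =>
      -- step existence
      obtain ⟨L, W, hLW, hLeast, hWz⟩ := union_cond hseg hreg' i z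
        (fun j => (g j).1) (fun j => (g j).2)
        (fun j k hjk hki => ⟨((IH k hki).2.2.2 j hjk).1, ((IH k hki).2.2.2 j hjk).2⟩)
      have hsub : cone (max L a) W ⊆ cone a z := by
        intro x hx t hta
        rw [hx t (lt_of_lt_of_le hta (le_max_right L a))]
        by_cases hex : ∃ j, j < i ∧ t < (g j).1
        · obtain ⟨j, hj, htj⟩ := hex
          rw [(hLW j hj).2 t htj]
          exact (IH j hj).2.2.1 (show (g j).2 ∈ cone (g j).1 (g j).2 from fun u hu => rfl) t hta
        · exact hWz t hex
      obtain ⟨cc, v, hv1, hv2⟩ := hD i (max L a) W hsub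
      obtain ⟨e, he⟩ := exists_gt hseg (max (max cc (max L a)) i)
      have hcce : cc ≤ e :=
        le_of_lt (lt_of_le_of_lt ((le_max_left _ _).trans (le_max_left _ _)) he)
      have hLe : max L a < e := lt_of_le_of_lt ((le_max_right _ _).trans (le_max_left _ _)) he
      have hie : i < e := lt_of_le_of_lt (le_max_right _ _) he
      have hcone_e : cone e v ⊆ cone cc v := fun x hx t ht => hx t (lt_of_lt_of_le ht hcce)
      have hvW : v ∈ cone (max L a) W := hv1 (fun t ht => rfl)
      have hne : (Phi a z D i g).Nonempty := by
        refine ⟨(e, v), hie, hcone_e.trans hv2, (hcone_e.trans hv1).trans hsub, fun j hj => ?_⟩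
        refine ⟨lt_of_le_of_lt ((hLW j hj).1.trans (le_max_left L a)) hLe, fun t ht => ?_⟩
        have htL : t < max L a := lt_of_lt_of_le ht ((hLW j hj).1.trans (le_max_left L a))
        rw [show (e, v).2 = v from rfl]
        rw [hvW t htL, (hLW j hj).2 t ht]
      -- unfold fix
      have hPhieq : Phi a z D i (fun j => if hj : j < i then g j else (a, z)) = Phi a z D i g :=
        Phi_congr (fun j hj => dif_pos hj)
      have hne' : (Phi a z D i (fun j => if hj : j < i then g j else (a, z))).Nonempty :=
        hPhieq.symm ▸ hne
      rw [hg i, dif_pos hne']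
      exact hPhieq ▸ hne'.some_mem
  -- extract the generic point
  refine ⟨fun t => (g t).2 t, ?_, ?_⟩
  · obtain ⟨i⟩ := (inferInstance : Nonempty κ)
    have hx : (fun t => (g t).2 t) ∈ cone (g i).1 (g i).2 := by
      intro t ht
      rcases lt_trichotomy t i with h | h | h
      · exact (((gspec i).2.2.2 t h).2 t (gspec t).1).symm
      · subst h; rfl
      · exact ((gspec t).2.2.2 i h).2 t ht
    exact (gspec i).2.2.1 hx
  · intro i
    have hx : (fun t => (g t).2 t) ∈ cone (g i).1 (g i).2 := by
      intro t ht
      rcases lt_trichotomy t i with h | h | h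
      · exact (((gspec i).2.2.2 t h).2 t (gspec t).1).symm
      · subst h; rfl
      · exact ((gspec t).2.2.2 i h).2 t ht
    exact (gspec i).2.1 hx


/-- `S` is `κ`-meagre -/
def Mgr (S : Set (κ → Bool)) : Prop :=
  ∃ E : κ → Set (κ → Bool), (∀ i, DenseG (E i)) ∧ S ∩ ⋂ i, E i = ∅

/-- `C` is comeagre in the cone of `(a,z)` -/
def Good (a : κ) (z : κ → Bool) (C : Set (κ → Bool)) : Prop :=
  ∃ D : κ → Set (κ → Bool), (∀ i, DenseB a z (D i)) ∧ cone a z ∩ ⋂ i, D i ⊆ C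

def OpenD (S : Set (κ → Bool)) : Prop := ∀ x ∈ S, ∃ a, cone a x ⊆ S

/-- Baire property -/
def BP (S : Set (κ → Bool)) : Prop := ∃ U, OpenD U ∧ Mgr ((S \ U) ∪ (U \ S))

omit [Uncountable κ] hseg hreg' in
lemma Mgr.mono {S T : Set (κ → Bool)} (hST : S ⊆ T) (h : Mgr T) : Mgr S := by
  obtain ⟨E, hE, hE2⟩ := h
  exact ⟨E, hE, Set.eq_empty_of_subset_empty (hE2 ▸ Set.inter_subset_inter_left _ hST)⟩

omit [Uncountable κ] hseg hreg' in
lemma DenseG.inter {A B : Set (κ → Bool)} (hA : DenseG A) (hB : DenseG B) :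
    DenseG (A ∩ B) := by
  intro b w
  obtain ⟨c, v, h1, h2⟩ := hA b w
  obtain ⟨c', v', h1', h2'⟩ := hB c v
  exact ⟨c', v', h1'.trans h1, Set.subset_inter (h1'.trans h2) h2'⟩

omit [Uncountable κ] hseg hreg' in
lemma Mgr.union {S T : Set (κ → Bool)} (hS : Mgr S) (hT : Mgr T) : Mgr (S ∪ T) := by
  obtain ⟨E, hE, hE2⟩ := hS
  obtain ⟨E', hE', hE2'⟩ := hT
  refine ⟨fun i => E i ∩ E' i, fun i => (hE i).inter (hE' i), ?_⟩
  rw [Set.eq_empty_iff_forall_notMem]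
  rintro x ⟨hx, hxI⟩
  have h1 : x ∈ ⋂ i, E i := Set.mem_iInter.mpr fun i => (Set.mem_iInter.mp hxI i).1
  have h2 : x ∈ ⋂ i, E' i := Set.mem_iInter.mpr fun i => (Set.mem_iInter.mp hxI i).2
  rcases hx with hx | hx
  · exact Set.eq_empty_iff_forall_notMem.mp hE2 x ⟨hx, h1⟩
  · exact Set.eq_empty_iff_forall_notMem.mp hE2' x ⟨hx, h2⟩

omit hseg hreg' in
lemma Mgr_empty : Mgr (∅ : Set (κ → Bool)) := by
  refine ⟨fun _ => Set.univ, fun i b w => ⟨b, w, subset_rfl, Set.subset_univ _⟩, by simp⟩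

omit hreg' in
lemma Mgr_iUnion {ι : Type u} (hι : #ι ≤ #κ) (S : ι → Set (κ → Bool))
    (h : ∀ i, Mgr (S i)) : Mgr (⋃ i, S i) := by
  classical
  rcases isEmpty_or_nonempty ι with hemp | hne
  · simp only [Set.iUnion_of_empty]; exact Mgr_empty
  choose E hE hE2 using h
  obtain ⟨f, hf⟩ := surj_of_card_le (κ := κ) (ι := ι × κ) (card_prod_le hι)
  refine ⟨fun k => E (f k).1 (f k).2, fun k => hE _ _, ?_⟩
  rw [Set.eq_empty_iff_forall_notMem]
  rintro x ⟨hx, hxI⟩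
  obtain ⟨i, hxi⟩ := Set.mem_iUnion.mp hx
  have : x ∈ ⋂ m, E i m := by
    refine Set.mem_iInter.mpr fun m => ?_
    obtain ⟨k, hk⟩ := hf (i, m)
    have := Set.mem_iInter.mp hxI k
    rwa [hk] at this
  exact Set.eq_empty_iff_forall_notMem.mp (hE2 i) x ⟨hxi, this⟩

lemma mgr_not_cone (a : κ) (z : κ → Bool) {S : Set (κ → Bool)} (hm : Mgr S) :
    ¬ (cone a z ⊆ S) := by
  intro hsub
  obtain ⟨E, hE, hE2⟩ := hm
  obtain ⟨x, hx1, hx2⟩ := generic hseg hreg' a z E (fun i => (hE i).denseB a z)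
  exact Set.eq_empty_iff_forall_notMem.mp hE2 x ⟨hsub hx1, Set.mem_iInter.mpr hx2⟩

omit hreg' in
lemma BP_open {S : Set (κ → Bool)} (h : OpenD S) : BP S :=
  ⟨S, h, by simpa using Mgr_empty⟩

omit hreg' in
lemma BP_compl {S : Set (κ → Bool)} (h : BP S) : BP Sᶜ := by
  obtain ⟨U, hU, hM⟩ := h
  set V : Set (κ → Bool) := {x | ∃ a, cone a x ⊆ Uᶜ} with hV
  have hUV : U ∩ V = ∅ := by
    rw [Set.eq_empty_iff_forall_notMem]
    rintro x ⟨hxU, a, ha⟩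
    exact ha (fun i _ => rfl) hxU
  have hVopen : OpenD V := by
    rintro x ⟨a, ha⟩
    exact ⟨a, fun y hy => ⟨a, (cone_eq_of_mem hy) ▸ ha⟩⟩
  have hdense : DenseG (U ∪ V) := by
    intro b w
    by_cases hbw : ∃ x ∈ cone b w, x ∈ U
    · obtain ⟨x, hxc, hxU⟩ := hbw
      obtain ⟨a, ha⟩ := hU x hxU
      refine ⟨max b a, x, ?_, ?_⟩
      · exact fun y hy => (cone_pair hxc (fun i _ => rfl) hy).1
      · exact fun y hy => Or.inl (ha (cone_anti (le_max_right b a) x hy))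
    · push_neg at hbw
      refine ⟨b, w, subset_rfl, fun y hy => Or.inr ⟨b, fun y' hy' => hbw y' ?_⟩⟩
      · rw [cone_eq_of_mem hy] at hy'; exact hy'
  refine ⟨V, hVopen, ?_⟩
  have hsub : (Sᶜ \ V ∪ V \ Sᶜ) ⊆ ((S \ U ∪ U \ S) ∪ (U ∪ V)ᶜ) := by
    rintro x (⟨hxS, hxV⟩ | ⟨hxV, hxS⟩)
    · by_cases hxU : x ∈ U
      · exact Or.inl (Or.inr ⟨hxU, hxS⟩)
      · exact Or.inr (fun hx => hx.elim hxU hxV)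
    · refine Or.inl (Or.inl ⟨not_not.mp hxS, fun hxU => ?_⟩)
      exact Set.eq_empty_iff_forall_notMem.mp hUV x ⟨hxU, hxV⟩
  refine Mgr.mono hsub (Mgr.union hM ?_)
  exact ⟨fun _ => U ∪ V, fun _ => hdense, by rw [Set.iInter_const]; exact Set.compl_inter_self _⟩

omit hreg' in
lemma BP_iUnion (f : κ → Set (κ → Bool)) (h : ∀ i, BP (f i)) : BP (⋃ i, f i) := by
  choose U hU hM using h
  refine ⟨⋃ i, U i, ?_, ?_⟩
  · rintro x hx
    obtain ⟨i, hxi⟩ := Set.mem_iUnion.mp hx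
    obtain ⟨a, ha⟩ := hU i x hxi
    exact ⟨a, ha.trans (Set.subset_iUnion U i)⟩
  · refine Mgr.mono ?_ (Mgr_iUnion hseg le_rfl (fun i => (f i \ U i ∪ U i \ f i)) hM)
    rintro x (⟨hx1, hx2⟩ | ⟨hx1, hx2⟩)
    · obtain ⟨i, hxi⟩ := Set.mem_iUnion.mp hx1
      exact Set.mem_iUnion.mpr ⟨i, Or.inl ⟨hxi, fun hxu => hx2 (Set.mem_iUnion.mpr ⟨i, hxu⟩)⟩⟩
    · obtain ⟨i, hxi⟩ := Set.mem_iUnion.mp hx1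
      exact Set.mem_iUnion.mpr ⟨i, Or.inr ⟨hxi, fun hxu => hx2 (Set.mem_iUnion.mpr ⟨i, hxu⟩)⟩⟩

omit hseg hreg' in
lemma kTop_open_cone {U : Set (κ → Bool)} (hU : @IsOpen _ (kTop κ) U) :
    ∀ x ∈ U, ∃ a, cone a x ⊆ U := by
  have hU' : TopologicalSpace.GenerateOpen
      {U : Set (κ → Bool) | ∃ (a : κ) (y : κ → Bool), U = {x | ∀ i, i < a → x i = y i}} U := hU
  clear hU
  induction hU' with
  | basic V hV =>
    obtain ⟨a, y, rfl⟩ := hV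
    intro x hx
    exact ⟨a, fun x' hx' i hi => (hx' i hi).trans (hx i hi)⟩
  | univ =>
    intro x _
    obtain ⟨a⟩ := (inferInstance : Nonempty κ)
    exact ⟨a, Set.subset_univ _⟩
  | inter V W _ _ IHV IHW =>
    rintro x ⟨hxV, hxW⟩
    obtain ⟨a, ha⟩ := IHV x hxV
    obtain ⟨b, hb⟩ := IHW x hxW
    exact ⟨max a b, fun y hy => ⟨ha (cone_anti (le_max_left a b) x hy),
      hb (cone_anti (le_max_right a b) x hy)⟩⟩
  | sUnion T _ IH =>
    rintro x hx
    obtain ⟨t, ht, hxt⟩ := hx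
    obtain ⟨a, ha⟩ := IH t ht x hxt
    exact ⟨a, ha.trans (Set.subset_sUnion_of_mem ht)⟩

omit hseg hreg' in
lemma section_openD {U : Set ((κ → Bool) × (κ → Bool))}
    (hU : @IsOpen _ (@instTopologicalSpaceProd _ _ (kTop κ) (kTop κ)) U) (x : κ → Bool) :
    OpenD {y | (x, y) ∈ U} := by
  letI : TopologicalSpace (κ → Bool) := kTop κ
  intro y hy
  obtain ⟨u, v, hu, hv, hxu, hyv, huv⟩ := isOpen_prod_iff.mp hU x y hy
  obtain ⟨a, ha⟩ := kTop_open_cone hv y hyv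
  exact ⟨a, fun y' hy' => huv ⟨hxu, ha hy'⟩⟩

omit hreg' in
lemma sectionBP {S : Set ((κ → Bool) × (κ → Bool))} (hS : KBorel2 κ S) (x : κ → Bool) :
    BP {y | (x, y) ∈ S} := by
  induction hS with
  | of_open U hU => exact BP_open hseg (section_openD hU x)
  | compl s _ IH => exact BP_compl hseg IH
  | iUnion f _ IH =>
    have : {y | (x, y) ∈ ⋃ i, f i} = ⋃ i, {y | (x, y) ∈ f i} := by
      ext y; simp
    rw [this]
    exact BP_iUnion hseg _ IH

/-- localization: a small cover of a cone by sets with the Baire property contains a set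
comeagre in a subcone -/
lemma exists_good_piece (b₀ : κ) (wq : κ → Bool) {I : Set κ} (hI : #I < #κ)
    (T : κ → Set (κ → Bool)) (hcov : cone b₀ wq ⊆ ⋃ m : I, T (m : κ))
    (hBP : ∀ m : κ, BP (T m)) :
    ∃ m ∈ I, ∃ cc v, cone cc v ⊆ cone b₀ wq ∧ Good cc v (T m) := by
  classical
  choose U hU hM using hBP
  by_cases hcase : ∃ m : I, ∃ x, x ∈ U (m : κ) ∧ x ∈ cone b₀ wq
  · obtain ⟨m, x, hxU, hxq⟩ := hcase
    obtain ⟨a, ha⟩ := hU (m : κ) x hxU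
    obtain ⟨E, hE, hE2⟩ := hM (m : κ)
    refine ⟨(m : κ), m.2, max b₀ a, x,
      fun y hy => (cone_pair hxq (fun i _ => rfl) hy).1, E,
      fun i => (hE i).denseB _ _, ?_⟩
    rintro y ⟨hy1, hy2⟩
    have hyU : y ∈ U (m : κ) := ha (cone_anti (le_max_right b₀ a) x hy1)
    by_contra hyT
    exact Set.eq_empty_iff_forall_notMem.mp hE2 y ⟨Or.inr ⟨hyU, hyT⟩, hy2⟩
  · push_neg at hcase
    exfalso
    have hmgr : Mgr (⋃ m : I, (T (m : κ) \ U (m : κ) ∪ U (m : κ) \ T (m : κ))) :=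
      Mgr_iUnion hseg hI.le _ (fun m => hM (m : κ))
    obtain ⟨E, hE, hE2⟩ := hmgr
    obtain ⟨x, hx1, hx2⟩ := generic hseg hreg' b₀ wq E (fun i => (hE i).denseB _ _)
    obtain ⟨m, hxm⟩ := Set.mem_iUnion.mp (hcov hx1)
    have hxU : x ∉ U (m : κ) := fun hc => (hcase m x hc) hx1
    exact Set.eq_empty_iff_forall_notMem.mp hE2 x
      ⟨Set.mem_iUnion.mpr ⟨m, Or.inl ⟨hxm, hxU⟩⟩, Set.mem_iInter.mpr hx2⟩

end Cat

/-- state of the main construction: condition `(len, w)`, point `pt`, colour `col` -/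
structure St (κ : Type u) where
  len : κ
  w : κ → Bool
  pt : κ → Bool
  col : κ

section Main
variable [Uncountable κ]
variable (c : (κ → Bool) → (κ → Bool) → κ) (μ₀ : κ)

/-- the invariant of the main construction at stage `i` -/
def ValidAt (g : κ → St κ) (i : κ) (s : St κ) : Prop :=
  i < s.len ∧
  (∀ j, j < i → (g j).len < s.len ∧ ∀ t, t < (g j).len → s.w t = (g j).w t) ∧
  (∀ j, j < i → ∀ t, t < (g j).len → s.pt t = (g j).w t) ∧
  (∀ j, j < i → c (g j).pt s.pt = (g j).col) ∧
  (∃ t, t < s.len ∧ s.w t ≠ s.pt t) ∧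
  Good s.len s.w {y | c s.pt y = s.col} ∧
  (∀ b, (∀ j, j < i → (g j).len ≤ b) → s.col < b ∨ s.col < μ₀)

lemma ValidAt_congr {g g' : κ → St κ} {i : κ} (hh : ∀ j, j < i → g j = g' j) (s : St κ) :
    ValidAt c μ₀ g i s ↔ ValidAt c μ₀ g' i s := by
  unfold ValidAt
  constructor <;> rintro ⟨h1, h2, h3, h4, h5, h6, h7⟩
  · exact ⟨h1, fun j hj => hh j hj ▸ h2 j hj, fun j hj => hh j hj ▸ h3 j hj,
      fun j hj => hh j hj ▸ h4 j hj, h5, h6, fun b hb => h7 b (fun j hj => hh j hj ▸ hb j hj)⟩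
  · exact ⟨h1, fun j hj => (hh j hj).symm ▸ h2 j hj, fun j hj => (hh j hj).symm ▸ h3 j hj,
      fun j hj => (hh j hj).symm ▸ h4 j hj, h5, h6,
      fun b hb => h7 b (fun j hj => (hh j hj).symm ▸ hb j hj)⟩

lemma Good.antiCone {a a' : κ} {z z' : κ → Bool} {C : Set (κ → Bool)}
    (h : Good a z C) (hsub : cone a' z' ⊆ cone a z) : Good a' z' C := by
  obtain ⟨D, hD, hD2⟩ := h
  exact ⟨D, fun k => (hD k).mono hsub, fun y hy =>
    hD2 ⟨hsub hy.1, hy.2⟩⟩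

variable (hseg : ∀ a : κ, #(Set.Iio a) < #κ) (hreg' : (#κ).IsRegular)
variable (hreg : ∀ x y i, x ≠ y → IsDelta x y i → c x y < i ∨ c x y < μ₀)
variable (hBorel : ∀ m : κ, KBorel2 κ {p | c p.1 p.2 = m})
include hseg hreg' hreg hBorel

lemma step_exists (g : κ → St κ) (i : κ)
    (IH : ∀ j, j < i → ValidAt c μ₀ g j (g j)) :
    ∃ s, ValidAt c μ₀ g i s := by
  classical
  -- the union of the conditions so far
  obtain ⟨L, W, hLW, hLeast, hWz⟩ := union_cond hseg hreg' i (fun _ => false)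
    (fun j => (g j).len) (fun j => (g j).w)
    (fun j k hjk hki => ⟨((IH k hki).2.1 j hjk).1, ((IH k hki).2.1 j hjk).2⟩)
  have hconesub : ∀ j, j < i → cone L W ⊆ cone (g j).len (g j).w := by
    intro j hj y hy t ht
    rw [hy t (lt_of_lt_of_le ht (hLW j hj).1)]
    exact (hLW j hj).2 t ht
  -- a generic point
  have hx : ∃ x, x ∈ cone L W ∧ ∀ j, j < i → c (g j).pt x = (g j).col := by
    by_cases hne : ∃ j₀, j₀ < i
    · obtain ⟨j₀, hj₀⟩ := hne
      haveI : Nonempty (Set.Iio i) := ⟨⟨j₀, hj₀⟩⟩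
      have hD : ∀ j : κ, ∃ D : κ → Set (κ → Bool), j < i →
          ((∀ k, DenseB (g j).len (g j).w (D k)) ∧
            cone (g j).len (g j).w ∩ ⋂ k, D k ⊆ {y | c (g j).pt y = (g j).col}) := by
        intro j
        by_cases hj : j < i
        · obtain ⟨D, hD1, hD2⟩ := (IH j hj).2.2.2.2.2.1
          exact ⟨D, fun _ => ⟨hD1, hD2⟩⟩
        · exact ⟨fun _ => Set.univ, fun h => absurd h hj⟩
      choose Df hDf using hD
      obtain ⟨f, hf⟩ := surj_of_card_le (κ := κ) (ι := Set.Iio i × κ)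
        (card_prod_le (hseg i).le)
      obtain ⟨x, hx1, hx2⟩ := generic hseg hreg' L W
        (fun k => Df ((f k).1 : κ) (f k).2)
        (fun k => ((hDf ((f k).1 : κ) (f k).1.2).1 (f k).2).mono
          (hconesub ((f k).1 : κ) (f k).1.2))
      refine ⟨x, hx1, fun j hj => ?_⟩
      refine (hDf j hj).2 ⟨hconesub j hj hx1, Set.mem_iInter.mpr fun k => ?_⟩
      obtain ⟨k', hk'⟩ := hf (⟨j, hj⟩, k)
      have := hx2 k'
      rw [hk'] at this
      exact this
    · exact ⟨W, self_mem_cone L W, fun j hj => absurd ⟨j, hj⟩ hne⟩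
  obtain ⟨x, hxc, hxcol⟩ := hx
  -- the flipped cone
  obtain ⟨b₀, hb₀⟩ := exists_gt hseg L
  set wq : κ → Bool := fun t => if t = L then !(x L) else x t with hwq
  have hagree : ∀ y ∈ cone b₀ wq, ∀ t, t < L → y t = x t := by
    intro y hy t ht
    rw [hy t (ht.trans hb₀)]
    simp only [hwq, if_neg (ne_of_lt ht)]
  have hflip : ∀ y ∈ cone b₀ wq, y L = !(x L) := by
    intro y hy
    rw [hy L hb₀]
    simp [hwq]
  have hcov : cone b₀ wq ⊆ ⋃ m : Set.Iio (max L μ₀), {y | c x y = (m : κ)} := by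
    intro y hy
    have hneq : x ≠ y := by
      intro he
      have := hflip y hy
      rw [← he] at this
      simp at this
    have hdelta : IsDelta x y L :=
      ⟨by rw [hflip y hy]; simp, fun t ht => (hagree y hy t ht).symm⟩
    have := hreg x y L hneq hdelta
    have hmem : c x y < max L μ₀ := by
      rcases this with h | h
      · exact lt_of_lt_of_le h (le_max_left _ _)
      · exact lt_of_lt_of_le h (le_max_right _ _)
    exact Set.mem_iUnion.mpr ⟨⟨c x y, hmem⟩, rfl⟩
  obtain ⟨m, hmI, cc, v, hccsub, hGoodm⟩ := exists_good_piece hseg hreg' b₀ wq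
    (hseg (max L μ₀)) (fun m => {y | c x y = m}) hcov
    (fun m => sectionBP hseg (hBorel m) x)
  -- choose the new length
  obtain ⟨e, he⟩ := exists_gt hseg (max (max cc b₀) i)
  have hcce : cc < e := lt_of_le_of_lt ((le_max_left _ _).trans (le_max_left _ _)) he
  have hb₀e : b₀ < e := lt_of_le_of_lt ((le_max_right _ _).trans (le_max_left _ _)) he
  have hie : i < e := lt_of_le_of_lt (le_max_right _ _) he
  have hLe : L < e := hb₀.trans hb₀e
  have hvq : v ∈ cone b₀ wq := hccsub (self_mem_cone cc v)
  refine ⟨⟨e, v, x, m⟩, hie, fun j hj => ⟨?_, fun t ht => ?_⟩, fun j hj t ht => ?_,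
    hxcol, ⟨L, hLe, ?_⟩, ?_, ?_⟩
  · exact lt_of_le_of_lt ((hLW j hj).1.trans hb₀.le) hb₀e
  · -- s.w t = (g j).w t
    show v t = (g j).w t
    have htL : t < L := lt_of_lt_of_le ht (hLW j hj).1
    rw [hvq t (htL.trans hb₀)]
    simp only [hwq, if_neg (ne_of_lt htL)]
    rw [hxc t htL]
    exact (hLW j hj).2 t ht
  · -- s.pt t = (g j).w t
    show x t = (g j).w t
    have htL : t < L := lt_of_lt_of_le ht (hLW j hj).1
    rw [hxc t htL]
    exact (hLW j hj).2 t ht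
  · -- flip coordinate
    show v L ≠ x L
    rw [hflip v hvq]
    simp
  · -- Good
    exact hGoodm.antiCone (fun y hy t ht => hy t (lt_of_lt_of_le ht hcce.le))
  · -- colour bound
    intro b hb
    have hmlt : (m : κ) < max L μ₀ := hmI
    rcases lt_max_iff.mp hmlt with h | h
    · exact Or.inl (lt_of_lt_of_le h (hLeast b hb))
    · exact Or.inr h

lemma build_exists : ∃ g : κ → St κ, ∀ i, ValidAt c μ₀ g i (g i) := by
  classical
  have wf : WellFounded ((· < ·) : κ → κ → Prop) := IsWellFounded.wf
  obtain ⟨a₀⟩ := (inferInstance : Nonempty κ)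
  let dflt : St κ := ⟨a₀, fun _ => false, fun _ => false, a₀⟩
  let F : ∀ i : κ, (∀ j, j < i → St κ) → St κ := fun i ih =>
    if hx : ∃ s, ValidAt c μ₀ (fun j => if hj : j < i then ih j hj else dflt) i s
    then hx.choose else dflt
  let g : κ → St κ := wf.fix F
  have hg : ∀ i, g i = if hx : ∃ s, ValidAt c μ₀
      (fun j => if hj : j < i then g j else dflt) i s then hx.choose else dflt :=
    fun i => wf.fix_eq F i
  refine ⟨g, fun i => ?_⟩
  induction i using wf.induction with
  | _ i IH =>
    obtain ⟨s, hs⟩ := step_exists c μ₀ hseg hreg' hreg hBorel g i IH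
    have hcong := ValidAt_congr c μ₀ (g := fun j => if hj : j < i then g j else dflt)
      (g' := g) (i := i) (fun j hj => dif_pos hj)
    have hx : ∃ s, ValidAt c μ₀ (fun j => if hj : j < i then g j else dflt) i s :=
      ⟨s, (hcong s).mpr hs⟩
    rw [hg i, dif_pos hx]
    exact (hcong _).mp hx.choose_spec


omit hreg hBorel in
/-- weak Fodor: some colour is attained unboundedly often -/
lemma exists_unbounded_fiber (g : κ → St κ) (hg : ∀ i, ValidAt c μ₀ g i (g i)) :
    ∃ m, ∀ b, ∃ α, b < α ∧ (g α).col = m := by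
  classical
  by_contra h
  push_neg at h
  choose bnd hbnd using h
  have hstep : ∀ b : κ, ∃ b', b < b' ∧ (g b).len < b' ∧ ∀ m, m < b → bnd m < b' := by
    intro b
    obtain ⟨u, hu⟩ := bdd_of_small hseg hreg' (S := bnd '' Set.Iio b)
      (lt_of_le_of_lt mk_image_le (hseg b))
    obtain ⟨b', hb'⟩ := exists_gt hseg (max (max b (g b).len) u)
    exact ⟨b', lt_of_le_of_lt ((le_max_left _ _).trans (le_max_left _ _)) hb',
      lt_of_le_of_lt ((le_max_right _ _).trans (le_max_left _ _)) hb',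
      fun m hm => lt_of_le_of_lt ((hu _ ⟨m, hm, rfl⟩).trans (le_max_right _ _)) hb'⟩
  obtain ⟨β₀, hβ₀⟩ := exists_gt hseg μ₀
  let β : ℕ → κ := fun n => Nat.rec β₀ (fun _ p => (hstep p).choose) n
  have hβs : ∀ n, β n < β (n+1) ∧ (g (β n)).len < β (n+1) ∧ ∀ m, m < β n → bnd m < β (n+1) :=
    fun n => (hstep (β n)).choose_spec
  haveI := (Set.countable_range β).to_subtype
  obtain ⟨bs, hub, hleast⟩ := exists_lub (Set.range β)
    (bdd_of_small hseg hreg' (lt_of_le_of_lt Cardinal.mk_le_aleph0 (aleph0_lt_mk (α := κ))))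
  have hβlt : ∀ n, β n < bs := fun n => lt_of_lt_of_le (hβs n).1 (hub _ ⟨n+1, rfl⟩)
  have hsome : ∀ j, j < bs → ∃ n, j < β n := by
    intro j hj; by_contra hc; push_neg at hc
    exact absurd (hleast j (by rintro s ⟨n, rfl⟩; exact hc n)) (not_le.mpr hj)
  have hlenb : ∀ j, j < bs → (g j).len ≤ bs := by
    intro j hj
    obtain ⟨n, hn⟩ := hsome j hj
    exact le_of_lt (lt_of_lt_of_le (lt_trans ((hg (β n)).2.1 j hn).1 (hβs n).2.1)
      (hub _ ⟨n+1, rfl⟩))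
  have hcolbs : (g bs).col < bs := by
    rcases (hg bs).2.2.2.2.2.2 bs hlenb with h | h
    · exact h
    · exact lt_trans (lt_trans h hβ₀) (hβlt 0)
  obtain ⟨n, hn⟩ := hsome _ hcolbs
  have h1 : bnd ((g bs).col) < bs := lt_of_lt_of_le ((hβs n).2.2 _ hn) (hub _ ⟨n+1, rfl⟩)
  exact hbnd ((g bs).col) bs h1 rfl

end Main
end S9

/-- If `κ` is an uncountable regular cardinal (an uncountable well-ordered type which
is an initial ordinal of regular cardinality) and `c : [2^κ]² → κ` is almost
`Δ`-regressive and `κ`-Borel, then there is a `c`-monochromatic set of size `κ`. -/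
theorem stmt9 {κ : Type u} [LinearOrder κ] [WellFoundedLT κ] [Uncountable κ]
    (hseg : ∀ a : κ, Cardinal.mk (Set.Iio a) < Cardinal.mk κ)
    (hreg' : (Cardinal.mk κ).IsRegular)
    (c : (κ → Bool) → (κ → Bool) → κ) (hsymm : ∀ x y, c x y = c y x)
    (μ₀ : κ)
    (hreg : ∀ x y i, x ≠ y → IsDelta x y i → c x y < i ∨ c x y < μ₀)
    (hBorel : ∀ m : κ, KBorel2 κ {p | c p.1 p.2 = m}) :
    ∃ Y : Set (κ → Bool), Cardinal.mk Y = Cardinal.mk κ ∧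
      ∃ m : κ, ∀ x ∈ Y, ∀ y ∈ Y, x ≠ y → c x y = m := by
  classical
  obtain ⟨g, hg⟩ := S9.build_exists c μ₀ hseg hreg' hreg hBorel
  obtain ⟨m, hm⟩ := S9.exists_unbounded_fiber c μ₀ hseg hreg' g hg
  have hdist : ∀ j k, j < k → (g j).pt ≠ (g k).pt := by
    intro j k hjk he
    obtain ⟨t, ht, hne⟩ := (hg j).2.2.2.2.1
    have h2 := (hg k).2.2.1 j hjk t ht
    rw [← he] at h2
    exact hne h2.symm
  set F := {α | (g α).col = m} with hF
  have hFunb : ∀ b, ∃ α ∈ F, b < α := by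
    intro b; obtain ⟨α, h1, h2⟩ := hm b; exact ⟨α, h2, h1⟩
  have hFcard : Cardinal.mk F = Cardinal.mk κ := by
    rcases lt_or_eq_of_le (Cardinal.mk_set_le F) with h | h
    · exfalso
      obtain ⟨b, hb⟩ := S9.bdd_of_small hseg hreg' h
      obtain ⟨α, hα, hbα⟩ := hFunb b
      exact absurd (hb α hα) (not_le.mpr hbα)
    · exact h
  refine ⟨(fun α => (g α).pt) '' F, ?_, m, ?_⟩
  · rw [Cardinal.mk_image_eq_of_injOn _ _ ?inj, hFcard]
    case inj =>
      intro α _ α' _ he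
      by_contra hne
      rcases lt_or_gt_of_ne hne with h | h
      · exact hdist _ _ h he
      · exact hdist _ _ h he.symm
  · rintro x ⟨α, hα, rfl⟩ y ⟨α', hα', rfl⟩ hxy
    rcases lt_trichotomy α α' with h | h | h
    · rw [(hg α').2.2.2.1 α h]
      exact hα
    · exact absurd (by rw [h]) hxy
    · rw [hsymm, (hg α).2.2.2.1 α' h]
      exact hα'
end

section
/- For every infinite cardinal κ and every function d : 2^κ → κ, there exist distinct x, y : κ → 2 such that d(x) = d(y) = Δ(x,y). Consequently, Δ_κ is a maximal triangle-free colouring into κ. -/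
theorem isDelta_unique {κ : Type*} [LinearOrder κ] {x y : κ → Bool} {i j : κ}
    (hi : IsDelta x y i) (hj : IsDelta x y j) : i = j := by
  rcases lt_trichotomy i j with h | h | h
  · exact absurd (hj.2 i h) hi.1
  · exact h
  · exact absurd (hi.2 j h) hj.1

theorem part1 {κ : Type*} [LinearOrder κ] [WellFoundedLT κ] (d : (κ → Bool) → κ) :
    ∃ x y : κ → Bool, x ≠ y ∧ d x = d y ∧ IsDelta x y (d x) := by
  classical
  by_contra h
  push_neg at h
  let F : ∀ i : κ, (∀ j, j < i → Bool) → Bool := fun i rec =>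
    if h : ∃ z : κ → Bool, d z = i ∧ ∀ j (hj : j < i), z j = rec j hj
    then ! (h.choose i) else false
  let x : κ → Bool := fun i => (wellFounded_lt (α := κ)).fix F i
  have hx : ∀ i, x i = F i (fun j _ => x j) := fun i => (wellFounded_lt (α := κ)).fix_eq F i
  have hex : ∃ z : κ → Bool, d z = d x ∧ ∀ j (hj : j < d x), z j = x j :=
    ⟨x, rfl, fun _ _ => rfl⟩
  obtain ⟨hz1, hz2⟩ := hex.choose_spec
  set z := hex.choose with hzdef
  have hxi : x (d x) = ! z (d x) := by
    rw [hx (d x)]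
    simp only [F]
    rw [dif_pos hex]
  have hne : z (d x) ≠ x (d x) := by
    rw [hxi]
    exact fun he => Bool.not_ne_self _ he.symm
  have hzx : z ≠ x := fun he => hne (congrFun he (d x))
  have hdelta : IsDelta z x (d z) := by
    rw [hz1]
    exact ⟨hne, hz2⟩
  exact h z x hzx hz1 hdelta

/-- For every infinite cardinal `κ` and every `d : 2^κ → κ` there are distinct `x, y`
with `d x = d y = Δ(x,y)`; consequently `Δ_κ` is a maximal triangle-free colouring into
`κ`: any symmetric colouring of `[2^κ ∪ {new point}]²` (modelled on `Option (2^κ)`)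
agreeing with `Δ` on pairs from `2^κ` has a monochromatic triangle. -/
theorem stmt11 {κ : Type*} [LinearOrder κ] [WellFoundedLT κ] [Infinite κ] :
    (∀ d : (κ → Bool) → κ, ∃ x y : κ → Bool, x ≠ y ∧ d x = d y ∧ IsDelta x y (d x)) ∧
    (∀ d : Option (κ → Bool) → Option (κ → Bool) → κ,
      (∀ p q, d p q = d q p) →
      (∀ x y : κ → Bool, x ≠ y → IsDelta x y (d (some x) (some y))) →
      ∃ p q r : Option (κ → Bool),
        p ≠ q ∧ q ≠ r ∧ p ≠ r ∧ d p q = d q r ∧ d p q = d p r) := by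
  refine ⟨part1, fun d hsymm hdel => ?_⟩
  obtain ⟨x, y, hxy, hd, hdelta⟩ := part1 (fun x => d none (some x))
  refine ⟨none, some x, some y, by simp, by simpa using hxy, by simp, ?_, hd⟩
  exact (isDelta_unique hdelta (hdel x y hxy)).symm ▸ rfl
end

section
/- Every odd-cycle-free colouring is isomorphic to a δ-colouring: if c : [X]² → κ has no monochromatic odd cycles, then there is an injective ι : X → 2^κ such that for all distinct x, y ∈ X, ι(x)(c(x,y)) ≠ ι(y)(c(x,y)). -/
section Aux
variable {X : Type*} {R : X → X → Prop}

/-- From an odd closed walk in an irreflexive relation, extract an odd cycle. -/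
lemma extract_cycle (hirr : ∀ x, ¬ R x x) :
    ∀ n : ℕ, Odd n → ∀ f : ℕ → X, (∀ i < n, R (f i) (f (i+1))) → f n = f 0 →
    ∃ k, 3 ≤ k ∧ Odd k ∧ ∃ x : ZMod k → X, Function.Injective x ∧
      ∀ j : ZMod k, R (x j) (x (j + 1)) := by
  intro n
  induction n using Nat.strong_induction_on with
  | _ n ih =>
  intro hodd f hw hc
  have hn1 : n ≠ 1 := by
    rintro rfl
    exact hirr (f 0) (hc ▸ hw 0 (by omega))
  have hn0 : n ≠ 0 := by rintro rfl; simp at hodd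
  by_cases hrep : ∃ i j, i < j ∧ j ≤ n ∧ ¬(i = 0 ∧ j = n) ∧ f i = f j
  · obtain ⟨i, j, hij, hjn, hne, hfe⟩ := hrep
    set d := j - i with hd
    have hd1 : 1 ≤ d := by omega
    have hdn : d < n := by
      rcases Nat.lt_or_ge d n with h | h
      · exact h
      · exact absurd ⟨by omega, by omega⟩ hne
    have hid : i + d = j := by omega
    rcases Nat.even_or_odd d with hde | hdo
    · -- second piece, of length e = n - d, is an odd closed walk
      set e := n - d with he
      have heo : Odd e := by
        obtain ⟨a, ha⟩ := hodd
        obtain ⟨b, hb⟩ := hde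
        exact ⟨a - b, by omega⟩
      set g : ℕ → X := fun m => if m < i then f m else f (m + d) with hg
      have hg0 : g 0 = f 0 := by
        by_cases h0 : 0 < i
        · simp [hg, h0]
        · have hi0 : i = 0 := by omega
          have : g 0 = f (0 + d) := by simp [hg, hi0]
          rw [this, Nat.zero_add, show d = j from by omega, ← hfe, hi0]
      have hge : g e = f 0 := by
        have h1 : ¬ e < i := by omega
        have : g e = f (e + d) := by simp [hg, h1]
        rw [this, show e + d = n from by omega, hc]
      have hgw : ∀ m < e, R (g m) (g (m+1)) := by
        intro m hm
        by_cases h1 : m + 1 < i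
        · have e1 : g m = f m := by simp [hg, show m < i from by omega]
          have e2 : g (m+1) = f (m+1) := by simp [hg, h1]
          rw [e1, e2]; exact hw m (by omega)
        · by_cases h2 : m < i
          · have hmi : m + 1 = i := by omega
            have e1 : g m = f m := by simp [hg, h2]
            have e2 : g (m+1) = f (m+1) := by
              have : g (m+1) = f (m+1+d) := by simp [hg, h1]
              rw [this, show m+1+d = j from by omega, ← hfe, hmi]
            rw [e1, e2]; exact hw m (by omega)
          · have e1 : g m = f (m + d) := by simp [hg, h2]
            have e2 : g (m+1) = f (m+1+d) := by simp [hg, show ¬ m+1 < i from by omega]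
            rw [e1, e2, show m+1+d = (m+d)+1 from by omega]
            exact hw (m + d) (by omega)
      have he1 : e ≠ 1 := by
        rintro h1
        have hr := hgw 0 (by omega)
        rw [show (0:ℕ)+1 = e from by omega, hge, hg0] at hr
        exact hirr (f 0) hr
      exact ih e (by omega) heo g hgw (by rw [hge, hg0])
    · -- first piece f(i), ..., f(j) is an odd closed walk of length d
      have hd3 : d ≠ 1 := by
        rintro h
        have h2 : f (i + 1) = f i := by
          have h3 : i + 1 = j := by omega
          rw [h3, hfe]
        exact hirr (f i) (h2 ▸ hw i (by omega))
      refine ih d hdn hdo (fun m => f (i + m)) (fun m hm => ?_) ?_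
      · simpa [Nat.add_assoc] using hw (i + m) (by omega)
      · show f (i + d) = f (i + 0)
        rw [hid, Nat.add_zero, ← hfe]
  · push_neg at hrep
    have hn3 : 3 ≤ n := by
      obtain ⟨m, rfl⟩ := hodd; omega
    haveI : NeZero n := ⟨hn0⟩
    haveI : Fact (1 < n) := ⟨by omega⟩
    refine ⟨n, hn3, hodd, fun j => f j.val, ?_, ?_⟩
    · intro a b hab
      have ha := ZMod.val_lt a
      have hb := ZMod.val_lt b
      apply ZMod.val_injective
      by_contra hne
      rcases Nat.lt_or_ge a.val b.val with h | h
      · exact hrep a.val b.val h (by omega) (by omega) hab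
      · exact hrep b.val a.val (by omega) (by omega) (by omega) hab.symm
    · intro j
      have hj := ZMod.val_lt j
      have hadd : (j + 1).val = (j.val + 1) % n := by
        rw [ZMod.val_add, ZMod.val_one]
      rcases Nat.lt_or_ge (j.val + 1) n with h | h
      · show R (f j.val) (f (j+1).val)
        rw [hadd, Nat.mod_eq_of_lt h]
        exact hw j.val (by omega)
      · have hjv : j.val + 1 = n := by omega
        have h0 : (j + 1).val = 0 := by rw [hadd, hjv, Nat.mod_self]
        show R (f j.val) (f (j+1).val)
        rw [h0, ← hc]
        have := hw j.val (by omega)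
        rwa [hjv] at this

/-- Walks of length `n` from `x` to `y` along `R`. -/
def HasWalk (R : X → X → Prop) (n : ℕ) (x y : X) : Prop :=
  ∃ f : ℕ → X, f 0 = x ∧ f n = y ∧ ∀ i < n, R (f i) (f (i+1))

lemma hasWalk_zero (x : X) : HasWalk R 0 x x :=
  ⟨fun _ => x, rfl, rfl, by omega⟩

lemma hasWalk_one {x y : X} (h : R x y) : HasWalk R 1 x y := by
  refine ⟨fun i => if i = 0 then x else y, by simp, by simp, ?_⟩
  intro i hi
  have : i = 0 := by omega
  simp [this, h]

lemma HasWalk.trans {n m : ℕ} {x y z : X} (h1 : HasWalk R n x y) (h2 : HasWalk R m y z) :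
    HasWalk R (n + m) x z := by
  obtain ⟨f, hf0, hfn, hf⟩ := h1
  obtain ⟨g, hg0, hgm, hg⟩ := h2
  refine ⟨fun i => if i < n then f i else g (i - n), ?_, ?_, ?_⟩
  · show (if 0 < n then f 0 else g (0 - n)) = x
    by_cases h0 : 0 < n
    · rw [if_pos h0, hf0]
    · have hn : n = 0 := by omega
      subst hn
      rw [if_neg h0, Nat.sub_zero, hg0, ← hfn, hf0]
  · show (if n + m < n then f (n + m) else g (n + m - n)) = z
    rw [if_neg (by omega), Nat.add_sub_cancel_left, hgm]
  · intro i hi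
    show R (if i < n then f i else g (i - n)) (if i + 1 < n then f (i+1) else g (i + 1 - n))
    by_cases h1 : i + 1 < n
    · rw [if_pos (by omega), if_pos h1]
      exact hf i (by omega)
    · by_cases h2 : i < n
      · rw [if_pos h2, if_neg h1]
        have hin : i + 1 = n := by omega
        have hgf : g (i + 1 - n) = f (i + 1) := by rw [hin, Nat.sub_self, hg0, ← hfn]
        rw [hgf]
        exact hf i (by omega)
      · rw [if_neg h2, if_neg h1, show i + 1 - n = (i - n) + 1 from by omega]
        exact hg (i - n) (by omega)

lemma HasWalk.symm (hs : ∀ x y, R x y → R y x) {n : ℕ} {x y : X}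
    (h : HasWalk R n x y) : HasWalk R n y x := by
  obtain ⟨f, hf0, hfn, hf⟩ := h
  refine ⟨fun i => f (n - i), by simp [hfn], by simp [hf0], fun i hi => ?_⟩
  show R (f (n - i)) (f (n - (i+1)))
  rw [show n - i = (n - (i+1)) + 1 from by omega]
  exact hs _ _ (hf (n - (i+1)) (by omega))

end Aux

/-- Every odd-cycle-free colouring is isomorphic to a `δ`-colouring: if
`c : [X]² → κ` has no monochromatic odd cycle, there is an injection `ι : X → 2^κ`
such that `ι x (c x y) ≠ ι y (c x y)` for all distinct `x, y`. -/
theorem stmt13 {X κ : Type*} (c : X → X → κ) (hsymm : ∀ x y, c x y = c y x)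
    (hfree : ¬ HasMonoOddCycle c) :
    ∃ ι : X → (κ → Bool), Function.Injective ι ∧
      ∀ x y : X, x ≠ y → ι x (c x y) ≠ ι y (c x y) := by
  classical
  have key : ∀ α : κ, ∃ f : X → Bool, ∀ x y : X, x ≠ y → c x y = α → f x ≠ f y := by
    intro α
    set R : X → X → Prop := fun x y => x ≠ y ∧ c x y = α with hR
    have hirr : ∀ x, ¬ R x x := fun x h => h.1 rfl
    have hRs : ∀ x y, R x y → R y x := fun x y h => ⟨h.1.symm, (hsymm y x).trans h.2⟩
    have hno : ∀ (n : ℕ) (x : X), Odd n → ¬ HasWalk R n x x := by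
      rintro n x hodd ⟨f, hf0, hfn, hfw⟩
      obtain ⟨k, h3, hk, xx, hinj, hcyc⟩ :=
        extract_cycle hirr n hodd f hfw (by rw [hfn, hf0])
      exact hfree ⟨k, h3, hk, xx, hinj, α, fun j => (hcyc j).2⟩
    have requiv : Equivalence (fun x y => ∃ n, HasWalk R n x y) :=
      ⟨fun x => ⟨0, hasWalk_zero x⟩,
       fun ⟨n, h⟩ => ⟨n, h.symm hRs⟩,
       fun ⟨n, h⟩ ⟨m, h'⟩ => ⟨n + m, h.trans h'⟩⟩
    let s : Setoid X := ⟨_, requiv⟩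
    let rep : X → X := fun x => (Quotient.mk s x).out
    have hrep : ∀ x, ∃ n, HasWalk R n (rep x) x := by
      intro x
      have h := Quotient.exact (s := s) (Quotient.out_eq (Quotient.mk s x))
      exact h
    have hrepeq : ∀ x y, R x y → rep x = rep y := fun x y h =>
      congrArg Quotient.out (Quotient.sound ⟨1, hasWalk_one h⟩)
    refine ⟨fun x => decide (∃ n, Odd n ∧ HasWalk R n (rep x) x), ?_⟩
    intro x y hne hcol heq
    have hxy : R x y := ⟨hne, hcol⟩
    have hre : rep x = rep y := hrepeq x y hxy
    have hP : (∃ n, Odd n ∧ HasWalk R n (rep x) x) ↔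
        (∃ n, Odd n ∧ HasWalk R n (rep y) y) := decide_eq_decide.mp heq
    by_cases hx : ∃ n, Odd n ∧ HasWalk R n (rep x) x
    · obtain ⟨a, ha, hwa⟩ := hx
      obtain ⟨b, hb, hwb⟩ := hP.mp ⟨a, ha, hwa⟩
      have hwalk : HasWalk R (a + 1 + b) (rep x) (rep x) := by
        have h1 : HasWalk R b y (rep x) := hre ▸ hwb.symm hRs
        exact (hwa.trans (hasWalk_one hxy)).trans h1
      obtain ⟨p, hp⟩ := ha; obtain ⟨q, hq⟩ := hb
      exact hno _ _ ⟨p + q + 1, by omega⟩ hwalk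
    · have hy : ¬ ∃ n, Odd n ∧ HasWalk R n (rep y) y := fun h => hx (hP.mpr h)
      obtain ⟨a, hwa⟩ := hrep x
      obtain ⟨b, hwb⟩ := hrep y
      have ha : Even a := Nat.not_odd_iff_even.mp fun h => hx ⟨a, h, hwa⟩
      have hb : Even b := Nat.not_odd_iff_even.mp fun h => hy ⟨b, h, hwb⟩
      have hwalk : HasWalk R (a + 1 + b) (rep x) (rep x) := by
        have h1 : HasWalk R b y (rep x) := hre ▸ hwb.symm hRs
        exact (hwa.trans (hasWalk_one hxy)).trans h1
      obtain ⟨p, hp⟩ := ha; obtain ⟨q, hq⟩ := hb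
      exact hno _ _ ⟨p + q, by omega⟩ hwalk
  refine ⟨fun x α => (key α).choose x, ?_, ?_⟩
  · intro x y hxy
    by_contra hne
    exact (key (c x y)).choose_spec x y hne rfl (congrFun hxy (c x y))
  · intro x y hne
    exact (key (c x y)).choose_spec x y hne rfl
end

section
/- If c : [X]² → κ is a maximal odd-cycle-free colouring into κ (κ infinite), then |X| = 2^κ. -/
namespace Stmt14Aux

variable {X κ : Type u}

/-- A walk of length `n` in colour `m`. -/
def IsWalk (c : X → X → κ) (m : κ) (w : ℕ → X) (n : ℕ) : Prop :=
  ∀ i < n, w i ≠ w (i + 1) ∧ c (w i) (w (i + 1)) = m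

lemma isWalk_single {c : X → X → κ} {m : κ} {x y : X} (hne : x ≠ y) (hc : c x y = m) :
    IsWalk c m (fun t => if t = 0 then x else y) 1 := by
  intro i hi
  have : i = 0 := by omega
  subst this
  simpa using ⟨hne, hc⟩

lemma isWalk_reverse {c : X → X → κ} (hs : ∀ a b, c a b = c b a) {m : κ} {w : ℕ → X} {n : ℕ}
    (h : IsWalk c m w n) : IsWalk c m (fun t => w (n - t)) n := by
  intro i hi
  have ha : n - (i + 1) < n := by omega
  have h1 : n - i = (n - (i + 1)) + 1 := by omega
  obtain ⟨hne, hc⟩ := h (n - (i + 1)) ha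
  constructor
  · simp only [h1]; exact hne.symm
  · simp only [h1]; rw [hs]; exact hc

lemma isWalk_concat {c : X → X → κ} {m : κ} {w1 w2 : ℕ → X} {n1 n2 : ℕ}
    (h1 : IsWalk c m w1 n1) (h2 : IsWalk c m w2 n2) (hj : w1 n1 = w2 0) :
    ∃ w, IsWalk c m w (n1 + n2) ∧ w 0 = w1 0 ∧ w (n1 + n2) = w2 n2 := by
  refine ⟨fun t => if t < n1 then w1 t else w2 (t - n1), ?_, ?_, ?_⟩
  · intro i hi
    by_cases hi1 : i + 1 < n1
    · have hi0 : i < n1 := by omega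
      simp only [if_pos hi1, if_pos hi0]
      exact h1 i hi0
    · by_cases hi2 : i < n1
      · have hieq : i + 1 = n1 := by omega
        simp only [if_pos hi2, if_neg hi1]
        have hw : w2 (i + 1 - n1) = w1 n1 := by
          rw [hieq]; simp [hj]
        rw [hw, ← hieq]
        exact h1 i hi2
      · simp only [if_neg hi2, if_neg hi1]
        have he : i + 1 - n1 = (i - n1) + 1 := by omega
        rw [he]
        exact h2 (i - n1) (by omega)
  · by_cases h0 : 0 < n1
    · simp [h0]
    · have hn0 : n1 = 0 := by omega
      subst hn0
      simpa using hj.symm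
  · have : ¬ (n1 + n2 < n1) := by omega
    simp [this]

/-- An edge of a closed walk, wrapping around. -/
lemma closed_edge {c : X → X → κ} {m : κ} {w : ℕ → X} {n : ℕ}
    (h : IsWalk c m w n) (hcl : w n = w 0) {a : ℕ} (ha : a < n) :
    w a ≠ w ((a + 1) % n) ∧ c (w a) (w ((a + 1) % n)) = m := by
  by_cases h1 : a + 1 < n
  · rw [Nat.mod_eq_of_lt h1]
    exact h a ha
  · have hae : a + 1 = n := by omega
    have : (a + 1) % n = 0 := by rw [hae]; exact Nat.mod_self n
    rw [this, ← hcl, ← hae]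
    exact h a ha

/-- Rotation of a closed walk. -/
lemma closed_rotate {c : X → X → κ} {m : κ} {w : ℕ → X} {n : ℕ} (hn : 1 < n)
    (h : IsWalk c m w n) (hcl : w n = w 0) (s : ℕ) :
    IsWalk c m (fun t => w ((t + s) % n)) n ∧
      w ((n + s) % n) = w ((0 + s) % n) := by
  constructor
  · intro i hi
    have key : (i + 1 + s) % n = ((i + s) % n + 1) % n := by
      conv_lhs => rw [show i + 1 + s = (i + s) + 1 from by omega]
      rw [Nat.add_mod (i + s) 1 n, Nat.mod_eq_of_lt hn]
    have ha : (i + s) % n < n := Nat.mod_lt _ (by omega)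
    have := closed_edge h hcl ha
    simpa [key] using this
  · rw [Nat.add_mod_left, Nat.zero_add]

/-- No monochromatic closed walk of odd length. -/
lemma noOddClosed {c : X → X → κ} (hfree : ¬ HasMonoOddCycle c) {m : κ} :
    ∀ n, Odd n → ∀ w : ℕ → X, IsWalk c m w n → w n ≠ w 0 := by
  intro n
  induction n using Nat.strong_induction_on with
  | _ n IH =>
    intro hodd w hw hcl
    have hn1 : n ≠ 1 := by
      rintro rfl
      exact (hw 0 (by omega)).1 hcl.symm
    have hn3 : 3 ≤ n := by
      rcases hodd with ⟨t, rfl⟩; omega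
    by_cases hinj : ∀ i j : ℕ, i < j → j < n → w i ≠ w j
    · -- an honest odd cycle
      haveI : NeZero n := ⟨by omega⟩
      apply hfree
      refine ⟨n, hn3, hodd, fun j => w j.val, ?_, m, ?_⟩
      · intro j1 j2 hj
        by_contra hne
        have hv : j1.val ≠ j2.val := fun h' => hne (ZMod.val_injective n h')
        rcases lt_or_gt_of_ne hv with h' | h'
        · exact hinj _ _ h' (ZMod.val_lt j2) hj
        · exact hinj _ _ h' (ZMod.val_lt j1) hj.symm
      · intro j
        have hv : (j + 1).val = (j.val + 1) % n := by
          conv_lhs => rw [show j + 1 = ((j.val + 1 : ℕ) : ZMod n) from by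
            push_cast [ZMod.natCast_val, ZMod.cast_id]; ring]
          exact ZMod.val_natCast n _
        show c (w j.val) (w ((j + 1).val)) = m
        rw [hv]
        exact (closed_edge hw hcl (ZMod.val_lt j)).2
    · -- a repeated vertex: split into two shorter closed walks
      push_neg at hinj
      obtain ⟨i, j, hij, hjn, hwij⟩ := hinj
      -- rotate so that the repeat is at position 0
      obtain ⟨hw', hcl'⟩ := closed_rotate (by omega) hw hcl i
      set w' : ℕ → X := fun t => w ((t + i) % n) with hw'def
      have hi_lt : i < n := by omega
      have hw'0 : w' 0 = w i := by
        simp only [hw'def, Nat.zero_add, Nat.mod_eq_of_lt hi_lt]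
      have hw'd : w' (j - i) = w i := by
        simp only [hw'def]
        rw [show j - i + i = j from by omega, Nat.mod_eq_of_lt hjn, hwij]
      have hw'n : w' n = w i := by
        simp only [hw'def, Nat.add_mod_left, Nat.mod_eq_of_lt hi_lt]
      set d := j - i with hd
      have hd1 : 1 ≤ d := by omega
      have hdn : d ≤ n - 1 := by omega
      -- one of d, n - d is odd
      rcases Nat.even_or_odd d with hde | hdo
      · -- n - d is odd
        have hod : Odd (n - d) := by
          rw [Nat.odd_iff] at hodd ⊢
          rw [Nat.even_iff] at hde
          omega
        have hwalk2 : IsWalk c m (fun t => w' (d + t)) (n - d) := by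
          intro t ht
          have := hw' (d + t) (by omega)
          simpa [show d + t + 1 = d + (t + 1) from by omega] using this
        refine IH (n - d) (by omega) hod _ hwalk2 ?_
        show w' (d + (n - d)) = w' (d + 0)
        rw [show d + (n - d) = n from by omega, hw'n]
        simpa [hw'd] using rfl
      · refine IH d (by omega) hdo w' (fun t ht => hw' t (by omega)) ?_
        rw [hw'd, hw'0]

/-- Connected in colour class `m`. -/
def Conn (c : X → X → κ) (m : κ) (x y : X) : Prop :=
  ∃ n w, IsWalk c m w n ∧ w 0 = x ∧ w n = y

lemma conn_refl (c : X → X → κ) (m : κ) (x : X) : Conn c m x x :=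
  ⟨0, fun _ => x, fun i hi => absurd hi (by omega), rfl, rfl⟩

lemma conn_symm {c : X → X → κ} (hs : ∀ a b, c a b = c b a) {m : κ} {x y : X}
    (h : Conn c m x y) : Conn c m y x := by
  obtain ⟨n, w, hw, h0, hn⟩ := h
  exact ⟨n, fun t => w (n - t), isWalk_reverse hs hw, by simpa using hn, by simpa using h0⟩

lemma conn_trans {c : X → X → κ} {m : κ} {x y z : X}
    (h1 : Conn c m x y) (h2 : Conn c m y z) : Conn c m x z := by
  obtain ⟨n1, w1, hw1, h10, h1n⟩ := h1
  obtain ⟨n2, w2, hw2, h20, h2n⟩ := h2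
  obtain ⟨w, hw, h0, hn⟩ := isWalk_concat hw1 hw2 (by rw [h1n, h20])
  exact ⟨n1 + n2, w, hw, by rw [h0, h10], by rw [hn, h2n]⟩

/-- The setoid of connectivity in colour class `m`. -/
def connSetoid (c : X → X → κ) (hs : ∀ a b, c a b = c b a) (m : κ) : Setoid X :=
  ⟨Conn c m, fun _ => conn_refl c m _, conn_symm hs, conn_trans⟩

/-- A representative of the connected component of `x` in colour class `m`. -/
noncomputable def rep (c : X → X → κ) (hs : ∀ a b, c a b = c b a) (m : κ) (x : X) : X :=
  (Quotient.mk (connSetoid c hs m) x).out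

lemma rep_conn (c : X → X → κ) (hs : ∀ a b, c a b = c b a) (m : κ) (x : X) :
    Conn c m (rep c hs m x) x :=
  @Quotient.mk_out _ (connSetoid c hs m) x

lemma rep_eq_of_conn {c : X → X → κ} {hs : ∀ a b, c a b = c b a} {m : κ} {x y : X}
    (h : Conn c m x y) : rep c hs m x = rep c hs m y :=
  congrArg Quotient.out (Quotient.sound h)

/-- The bipartition of colour class `m`: true iff `x` is at odd distance from
its component representative. -/
def fcol (c : X → X → κ) (hs : ∀ a b, c a b = c b a) (m : κ) (x : X) : Prop :=
  ∃ n w, Odd n ∧ IsWalk c m w n ∧ w 0 = rep c hs m x ∧ w n = x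

/-- Along an edge of colour `m`, the bipartition flips. -/
lemma fcol_flip {c : X → X → κ} (hs : ∀ a b, c a b = c b a)
    (hfree : ¬ HasMonoOddCycle c) {m : κ} {x y : X}
    (hne : x ≠ y) (hc : c x y = m) : fcol c hs m x ↔ ¬ fcol c hs m y := by
  have hconn : Conn c m x y :=
    ⟨1, fun t => if t = 0 then x else y, isWalk_single hne hc, by simp, by simp⟩
  have hrep : rep c hs m x = rep c hs m y := rep_eq_of_conn hconn
  constructor
  · rintro ⟨n1, w1, ho1, hw1, h10, h1n⟩ ⟨n2, w2, ho2, hw2, h20, h2n⟩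
    -- walk rep → x, edge x → y, reversed walk y → rep : odd closed walk
    obtain ⟨wa, hwa, ha0, han⟩ :=
      isWalk_concat hw1 (isWalk_single hne hc) (by simp [h1n])
    have hrev := isWalk_reverse hs hw2
    obtain ⟨wb, hwb, hb0, hbn⟩ := isWalk_concat hwa hrev (by simpa [han] using h2n.symm)
    refine noOddClosed hfree (n1 + 1 + n2) ?_ wb hwb ?_
    · rw [Nat.odd_iff] at ho1 ho2 ⊢
      omega
    · rw [hbn, hb0, ha0, h10]
      simpa [hrep] using h20
  · intro hny
    obtain ⟨n0, w0, hw0, h00, h0n⟩ := rep_conn c hs m x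
    rcases Nat.even_or_odd n0 with he | ho
    · exfalso
      apply hny
      obtain ⟨wa, hwa, ha0, han⟩ :=
        isWalk_concat hw0 (isWalk_single hne hc) (by simp [h0n])
      refine ⟨n0 + 1, wa, ?_, hwa, ?_, by simpa using han⟩
      · rw [Nat.odd_iff]; rw [Nat.even_iff] at he; omega
      · rw [ha0, h00, hrep]
    · exact ⟨n0, w0, ho, hw0, h00, h0n⟩

/-- The extension of `c` to `Option X` given by attaching the new point `none`
to each `x` with colour `g x`. -/
def extD (c : X → X → κ) (g : X → κ) (m0 : κ) : Option X → Option X → κ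
  | some u, some v => c u v
  | some u, none => g u
  | none, some v => g v
  | none, none => m0

@[simp] lemma extD_some_some (c : X → X → κ) (g : X → κ) (m0 : κ) (u v : X) :
    extD c g m0 (some u) (some v) = c u v := rfl

@[simp] lemma extD_some_none (c : X → X → κ) (g : X → κ) (m0 : κ) (u : X) :
    extD c g m0 (some u) none = g u := rfl

@[simp] lemma extD_none_some (c : X → X → κ) (g : X → κ) (m0 : κ) (v : X) :
    extD c g m0 none (some v) = g v := rfl

end Stmt14Aux

open Stmt14Aux

set_option maxHeartbeats 1000000 in

/-- If `c : [X]² → κ` (κ infinite) is a maximal odd-cycle-free colouring into `κ`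
(it is odd-cycle-free, but every symmetric extension to `[X ∪ {y}]²` for a new point
`y` — modelled by `Option X` with new point `none` — has a monochromatic odd cycle),
then `|X| = 2^κ`. -/
theorem stmt14 {X κ : Type u} [Infinite κ] (c : X → X → κ)
    (hsymm : ∀ x y, c x y = c y x)
    (hfree : ¬ HasMonoOddCycle c)
    (hmax : ∀ d : Option X → Option X → κ, (∀ p q, d p q = d q p) →
      (∀ x y : X, d (some x) (some y) = c x y) → HasMonoOddCycle d) :
    Cardinal.mk X = 2 ^ Cardinal.mk κ := by
  classical
  set e : X → (κ → Prop) := fun x m => fcol c hsymm m x with he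
  have einj : Function.Injective e := by
    intro x y hxy
    by_contra hne
    have h1 := fcol_flip hsymm hfree hne (rfl : c x y = c x y)
    have h2 : fcol c hsymm (c x y) x = fcol c hsymm (c x y) y := congrFun hxy (c x y)
    rw [h2] at h1
    exact iff_not_self h1
  have esurj : Function.Surjective e := by
    by_contra hsurj
    rw [Function.Surjective] at hsurj
    push_neg at hsurj
    obtain ⟨z, hz⟩ := hsurj
    have hx : ∀ x : X, ∃ m, ¬ (fcol c hsymm m x ↔ z m) := by
      intro x
      by_contra hcon
      push_neg at hcon
      apply hz x
      funext m
      show fcol c hsymm m x = z m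
      exact propext (hcon m)
    choose g hg using hx
    obtain ⟨k, hk3, hkodd, x, hxinj, m, hmono⟩ :=
      hmax (extD c g (Classical.arbitrary κ))
        (fun a b => by cases a <;> cases b <;> simp [hsymm]) (fun u v => rfl)
    haveI : NeZero k := ⟨by omega⟩
    by_cases hnone : ∀ j, x j ≠ none
    · apply hfree
      have hsome : ∀ j, ∃ a, x j = some a := by
        intro j
        cases hxj : x j with
        | none => exact absurd hxj (hnone j)
        | some a => exact ⟨a, rfl⟩
      choose y hy using hsome
      refine ⟨k, hk3, hkodd, y, ?_, m, ?_⟩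
      · intro j1 j2 h
        apply hxinj
        rw [hy j1, hy j2, h]
      · intro j
        have h0 := hmono j
        rw [hy j, hy (j + 1)] at h0
        simpa using h0
    · push_neg at hnone
      obtain ⟨j0, hj0⟩ := hnone
      set x' : ZMod k → Option X := fun j => x (j + j0) with hx'
      have hx'inj : Function.Injective x' := by
        intro a b hab
        have := hxinj hab
        exact add_right_cancel this
      have hx'0 : x' 0 = none := by simp [hx', hj0]
      have hx'mono : ∀ j, extD c g (Classical.arbitrary κ) (x' j) (x' (j + 1)) = m := by
        intro j
        have h0 := hmono (j + j0)
        simpa [hx', add_right_comm] using h0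
      have hne0 : ∀ j : ZMod k, j ≠ 0 → x' j ≠ none := by
        intro j hj hcon
        exact hj (hx'inj (hcon.trans hx'0.symm))
      have hcast_ne : ∀ i : ℕ, 1 ≤ i → i < k → ((i : ZMod k) ≠ 0) := by
        intro i h1 h2 hcon
        have hv : (i : ZMod k).val = i := ZMod.val_natCast_of_lt h2
        rw [hcon, ZMod.val_zero] at hv
        omega
      have hsome : ∀ i : ℕ, 1 ≤ i → i ≤ k - 1 → ∃ a, x' (i : ZMod k) = some a := by
        intro i h1 h2
        cases hxi : x' (i : ZMod k) with
        | none => exact absurd hxi (hne0 _ (hcast_ne i h1 (by omega)))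
        | some a => exact ⟨a, rfl⟩
      obtain ⟨a1, ha1⟩ := hsome 1 le_rfl (by omega)
      set p : ℕ → X := fun i => (x' (i : ZMod k)).getD a1 with hpdef
      have hp : ∀ i : ℕ, 1 ≤ i → i ≤ k - 1 → x' (i : ZMod k) = some (p i) := by
        intro i h1 h2
        obtain ⟨a, ha⟩ := hsome i h1 h2
        rw [hpdef]
        simp [ha]
      have hedge : ∀ i : ℕ, 1 ≤ i → i ≤ k - 2 →
          p i ≠ p (i + 1) ∧ c (p i) (p (i + 1)) = m := by
        intro i h1 h2
        have hcast : ((i : ZMod k) + 1) = ((i + 1 : ℕ) : ZMod k) := by push_cast; ring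
        have hmn := hx'mono (i : ZMod k)
        rw [hcast, hp i h1 (by omega), hp (i + 1) (by omega) (by omega)] at hmn
        refine ⟨?_, by simpa using hmn⟩
        intro hcon
        have hxx : x' (i : ZMod k) = x' ((i + 1 : ℕ) : ZMod k) := by
          rw [hp i h1 (by omega), hp (i + 1) (by omega) (by omega), hcon]
        have hv := congrArg ZMod.val (hx'inj hxx)
        rw [ZMod.val_natCast_of_lt (by omega), ZMod.val_natCast_of_lt (by omega)] at hv
        omega
      have hp1 : x' 1 = some (p 1) := by
        have h0 := hp 1 le_rfl (by omega)
        rwa [Nat.cast_one] at h0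
      have hend1 : g (p 1) = m := by
        have h0 := hx'mono 0
        rw [zero_add, hx'0, hp1] at h0
        simpa using h0
      have hpk : x' ((k - 1 : ℕ) : ZMod k) = some (p (k - 1)) := hp (k - 1) (by omega) le_rfl
      have hendk : g (p (k - 1)) = m := by
        have h0 := hx'mono ((k - 1 : ℕ) : ZMod k)
        have hc1 : ((k - 1 : ℕ) : ZMod k) + 1 = 0 := by
          have h2 : (((k - 1) + 1 : ℕ) : ZMod k) = 0 := by
            rw [show (k - 1) + 1 = k from by omega]
            exact ZMod.natCast_self k
          rw [← h2]
          push_cast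
          ring
        rw [hc1, hx'0, hpk] at h0
        simpa using h0
      have hchain : ∀ i : ℕ, 1 ≤ i → i ≤ k - 1 →
          ((fcol c hsymm m (p i) ↔ fcol c hsymm m (p 1)) ↔ Odd i) := by
        intro i h1
        induction i, h1 using Nat.le_induction with
        | base =>
          intro _
          simp [Nat.odd_iff]
        | succ i hi IH =>
          intro h2
          have hIH := IH (by omega)
          obtain ⟨hne', hc'⟩ := hedge i hi (by omega)
          have hfl := fcol_flip hsymm hfree hne' hc'
          have hodd : Odd (i + 1) ↔ ¬ Odd i := by
            rw [Nat.odd_iff, Nat.odd_iff]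
            omega
          rw [hodd, ← hIH]
          tauto
      have hk1 := hchain (k - 1) (by omega) le_rfl
      have hnotodd : ¬ Odd (k - 1) := by
        rw [Nat.odd_iff] at hkodd ⊢
        omega
      have hiff : fcol c hsymm m (p (k - 1)) ↔ fcol c hsymm m (p 1) := by
        have h1 := hg (p 1)
        have h2 := hg (p (k - 1))
        rw [hend1] at h1
        rw [hendk] at h2
        tauto
      exact hnotodd (hk1.mp hiff)
  have hcongr : Cardinal.mk X = Cardinal.mk (κ → Prop) :=
    Cardinal.mk_congr (Equiv.ofBijective e ⟨einj, esurj⟩)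
  rw [hcongr]
  exact Cardinal.mk_set
end

section
/- Suppose c : [ω₁]² → ω is a triangle-free colouring such that for every β < ω₁ the map α ↦ c(α, β) (for α < β) is injective. Then c is not a maximal triangle-free colouring; in fact there exists d : ω₁ → ω such that for all α < β < ω₁ it is not the case that d(α) = d(β) = c(α,β). -/
open Classical in
/-- Auxiliary recursive definition of the function `d`. -/
noncomputable def stmt15Aux {W : Type*} [LinearOrder W] [wf : WellFoundedLT W]
    (c : W → W → ℕ) (a0 a1 : W) : W → ℕ :=
  wf.wf.fix (fun β F =>
    if β = a0 ∨ β = a1 then c a0 a1 + 1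
    else if h : ∃ α, ∃ hh : α < β, c α β ≠ F α hh then c h.choose β else 0)

open Classical in
theorem stmt15Aux_eq {W : Type*} [LinearOrder W] [wf : WellFoundedLT W]
    (c : W → W → ℕ) (a0 a1 : W) (β : W) :
    stmt15Aux c a0 a1 β =
      if β = a0 ∨ β = a1 then c a0 a1 + 1
      else if h : ∃ α, ∃ _ : α < β, c α β ≠ stmt15Aux c a0 a1 α then c h.choose β
      else 0 :=
  wf.wf.fix_eq _ β

/-- Suppose `c : [ω₁]² → ω` (here `W` is a well-ordered uncountable type all of whose
proper initial segments are countable, i.e. a copy of `ω₁`) is a triangle-free colouring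
such that each fibre map `α ↦ c α β` (`α < β`) is injective. Then there is
`d : ω₁ → ω` such that for no `α < β` does `d α = d β = c α β` hold; in particular `c`
is not a maximal triangle-free colouring. -/
theorem stmt15 {W : Type*} [LinearOrder W] [WellFoundedLT W] [Uncountable W]
    (hW : ∀ b : W, (Set.Iio b).Countable)
    (c : W → W → ℕ) (hsymm : ∀ a b, c a b = c b a)
    (htf : ¬ ∃ a b e : W, a < b ∧ b < e ∧ c a b = c b e ∧ c a b = c a e)
    (hinj : ∀ b : W, Set.InjOn (fun a => c a b) (Set.Iio b)) :
    ∃ d : W → ℕ, ∀ a b : W, a < b → ¬ (d a = d b ∧ c a b = d a) := by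
  classical
  have hwf : WellFounded ((· < ·) : W → W → Prop) := IsWellFounded.wf
  obtain ⟨x, y, hxy⟩ := exists_pair_ne W
  obtain ⟨a0, -, ha0⟩ := hwf.has_min Set.univ ⟨x, trivial⟩
  have ha0le : ∀ z : W, a0 ≤ z := fun z => not_lt.1 (ha0 z trivial)
  have hex : ∃ z : W, a0 < z := by
    rcases eq_or_ne x a0 with rfl | hx
    · exact ⟨y, (ha0le y).lt_of_ne hxy⟩
    · exact ⟨x, (ha0le x).lt_of_ne (Ne.symm hx)⟩
  obtain ⟨a1, ha1mem, ha1min⟩ := hwf.has_min {z | a0 < z} hex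
  have ha01 : a0 < a1 := ha1mem
  set d : W → ℕ := stmt15Aux c a0 a1 with hd
  have hda0 : d a0 = c a0 a1 + 1 := by
    rw [hd, stmt15Aux_eq]; simp
  have hda1 : d a1 = c a0 a1 + 1 := by
    rw [hd, stmt15Aux_eq]; simp
  have key : ∀ b : W, ¬(b = a0 ∨ b = a1) → ∃ α, ∃ _ : α < b, c α b ≠ d α := by
    intro b hb
    push_neg at hb
    by_contra hcon
    push_neg at hcon
    have hb0 : a0 < b := (ha0le b).lt_of_ne (Ne.symm hb.1)
    have hb1 : a1 < b := (not_lt.1 (ha1min b hb0)).lt_of_ne (Ne.symm hb.2)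
    have e0 : c a0 b = d a0 := hcon a0 hb0
    have e1 : c a1 b = d a1 := hcon a1 hb1
    have : a0 = a1 := hinj b (Set.mem_Iio.2 hb0) (Set.mem_Iio.2 hb1)
      (by simp only [e0, e1, hda0, hda1])
    exact ha01.ne this
  have hdb : ∀ b : W, ¬(b = a0 ∨ b = a1) →
      ∃ g, g < b ∧ c g b ≠ d g ∧ d b = c g b := by
    intro b hb
    have h := key b hb
    obtain ⟨hlt, hne⟩ := h.choose_spec
    refine ⟨h.choose, hlt, hne, ?_⟩
    show stmt15Aux c a0 a1 b = c h.choose b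
    rw [stmt15Aux_eq, if_neg hb]
    exact dif_pos h
  refine ⟨d, ?_⟩
  rintro a b hab ⟨hdd, hcb⟩
  by_cases hbsp : b = a0 ∨ b = a1
  · rcases hbsp with rfl | rfl
    · exact absurd hab (not_lt.2 (ha0le a))
    · have ha : a = a0 := by
        by_contra hne
        exact ha1min a ((ha0le a).lt_of_ne (Ne.symm hne)) hab
      subst ha
      rw [hda0] at hdd hcb
      rw [hdd] at hcb
      omega
  · obtain ⟨g, hgb, hgne, hdbe⟩ := hdb b hbsp
    rcases eq_or_ne a g with rfl | hag
    · exact hgne hcb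
    · have : a = g := hinj b (Set.mem_Iio.2 hab) (Set.mem_Iio.2 hgb)
        (by show c a b = c g b; rw [hcb, hdd, hdbe])
      exact hag this
end

section
/- Let c : [ω₁]² → ω be such that for every β < ω₁ the map α ↦ c(α,β) on α < β is finite-to-one. Let ℙ be the poset of pairs (s, f) where s is a finite subset of ω₁, f : s → ω, and for no α < β in s does f(α) = f(β) = c(α,β), ordered by reverse inclusion of f. Then ℙ satisfies the countable chain condition. -/
/-- If a set maps into a countable set injectively, it is countable. -/
lemma my_countable_of_injOn {α β : Type*} {S : Set α} {T : Set β} (f : α → β)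
    (hm : ∀ a ∈ S, f a ∈ T) (hinj : Set.InjOn f S) (hT : T.Countable) : S.Countable := by
  haveI := hT.to_subtype
  have : Countable ↥S := by
    refine Function.Injective.countable (f := fun a : S => (⟨f a, hm a a.2⟩ : T)) ?_
    intro a b hab
    exact Subtype.ext (hinj a.2 b.2 (by simpa using hab))
  exact Set.countable_coe_iff.mp this

/-- An uncountable set has an uncountable fibre over a countable index. -/
lemma my_exists_uncountable_fiber {α β : Type*} [Countable β] {S : Set α}
    (hS : ¬ S.Countable) (f : α → β) : ∃ b, ¬ {a ∈ S | f a = b}.Countable := by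
  by_contra h
  push_neg at h
  apply hS
  have hU : S = ⋃ b, {a ∈ S | f a = b} := by ext a; simp
  rw [hU]
  exact Set.countable_iUnion h

lemma my_insert_inter_insert {α : Type*} [DecidableEq α] (x : α) (s t : Finset α) :
    insert x s ∩ insert x t = insert x (s ∩ t) := by
  ext a; simp [Finset.mem_insert, Finset.mem_inter]; tauto

/-- Disjoint refinement step: if every point lies in countably many members of an
uncountable family of finsets, there is an uncountable pairwise disjoint subfamily. -/
lemma my_disjoint_subfamily {α : Type*} [DecidableEq α] (𝒮 : Set (Finset α))
    (h𝒮 : ¬ 𝒮.Countable) (hpt : ∀ x : α, {s ∈ 𝒮 | x ∈ s}.Countable) :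
    ∃ 𝒮' ⊆ 𝒮, ¬ 𝒮'.Countable ∧ ∀ s ∈ 𝒮', ∀ t ∈ 𝒮', s ≠ t → s ∩ t = ∅ := by
  classical
  set D : Set (Set (Finset α)) :=
    {𝒯 | 𝒯 ⊆ 𝒮 ∧ ∀ s ∈ 𝒯, ∀ t ∈ 𝒯, s ≠ t → s ∩ t = ∅} with hD
  obtain ⟨M, hM⟩ : ∃ m, Maximal (· ∈ D) m := by
    apply zorn_subset
    intro c hc hchain
    refine ⟨⋃₀ c, ⟨?_, ?_⟩, fun s hs => Set.subset_sUnion_of_mem hs⟩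
    · intro s hs
      obtain ⟨a, ha, hsa⟩ := hs
      exact (hc ha).1 hsa
    · intro s hs t ht hst
      obtain ⟨a, ha, hsa⟩ := hs
      obtain ⟨b, hb, htb⟩ := ht
      rcases eq_or_ne a b with rfl | hab
      · exact (hc ha).2 s hsa t htb hst
      rcases hchain ha hb hab with h | h
      · exact (hc hb).2 s (h hsa) t htb hst
      · exact (hc ha).2 s hsa t (h htb) hst
  refine ⟨M, hM.1.1, ?_, hM.1.2⟩
  intro hMc
  apply h𝒮
  have hU : (⋃ t ∈ M, (↑t : Set α)).Countable :=
    Set.Countable.biUnion hMc (fun t _ => t.finite_toSet.countable)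
  have hsub : 𝒮 ⊆ M ∪ ⋃ x ∈ ⋃ t ∈ M, (↑t : Set α), {s ∈ 𝒮 | x ∈ s} := by
    intro s hs
    by_cases hsM : s ∈ M
    · exact Or.inl hsM
    right
    have : ¬ (∀ t ∈ M, s ∩ t = ∅) := by
      intro hdisj
      have hmem : M ∪ {s} ∈ D := by
        constructor
        · intro u hu
          rcases hu with hu | hu
          · exact hM.1.1 hu
          · simp only [Set.mem_singleton_iff] at hu; subst hu; exact hs
        · intro u hu v hv huv
          rcases hu with hu | hu <;> rcases hv with hv | hv
          · exact hM.1.2 u hu v hv huv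
          · simp only [Set.mem_singleton_iff] at hv; subst hv
            rw [Finset.inter_comm]; exact hdisj u hu
          · simp only [Set.mem_singleton_iff] at hu; subst hu
            exact hdisj v hv
          · simp only [Set.mem_singleton_iff] at hu hv; subst hu; subst hv
            exact absurd rfl huv
      have := hM.2 hmem (Set.subset_union_left)
      exact hsM (this (Or.inr rfl))
    push_neg at this
    obtain ⟨t, htM, hne⟩ := this
    obtain ⟨x, hx⟩ := hne
    simp only [Finset.mem_inter] at hx
    refine Set.mem_biUnion ?_ ⟨hs, hx.1⟩
    exact Set.mem_biUnion htM hx.2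
  exact Set.Countable.mono hsub (Set.Countable.union hMc
    (Set.Countable.biUnion hU (fun x _ => hpt x)))

/-- Δ-system lemma, fixed-cardinality version. -/
lemma my_delta_system_aux {α : Type*} [DecidableEq α] :
    ∀ n : ℕ, ∀ 𝒮 : Set (Finset α), (∀ s ∈ 𝒮, s.card = n) → ¬ 𝒮.Countable →
      ∃ R : Finset α, ∃ 𝒮' ⊆ 𝒮, ¬ 𝒮'.Countable ∧
        ∀ s ∈ 𝒮', ∀ t ∈ 𝒮', s ≠ t → s ∩ t = R := by
  intro n
  induction n with
  | zero =>
      intro 𝒮 hcard h𝒮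
      exfalso
      apply h𝒮
      refine Set.Countable.mono ?_ (Set.countable_singleton (∅ : Finset α))
      intro s hs
      simp [Finset.card_eq_zero.mp (hcard s hs)]
  | succ n ih =>
      intro 𝒮 hcard h𝒮
      by_cases hx : ∃ x : α, ¬ {s ∈ 𝒮 | x ∈ s}.Countable
      · obtain ⟨x, hx⟩ := hx
        set 𝒮₁ : Set (Finset α) := (fun s => s.erase x) '' {s ∈ 𝒮 | x ∈ s} with h𝒮₁
        have hinj : Set.InjOn (fun s => s.erase x) {s ∈ 𝒮 | x ∈ s} := by
          intro s hs t ht h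
          rw [← Finset.insert_erase hs.2, ← Finset.insert_erase ht.2]
          simp only at h; rw [h]
        have h𝒮₁unc : ¬ 𝒮₁.Countable := by
          intro hc
          exact hx (my_countable_of_injOn _ (fun a ha => Set.mem_image_of_mem _ ha) hinj hc)
        have h𝒮₁card : ∀ t ∈ 𝒮₁, t.card = n := by
          rintro t ⟨s, hs, rfl⟩
          rw [Finset.card_erase_of_mem hs.2, hcard s hs.1]
          rfl
        obtain ⟨R', 𝒮'', h''sub, h''unc, h''pair⟩ := ih 𝒮₁ h𝒮₁card h𝒮₁unc
        have hxnot : ∀ t ∈ 𝒮'', x ∉ t := by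
          intro t ht
          obtain ⟨s, _, rfl⟩ := h''sub ht
          exact Finset.notMem_erase x s
        refine ⟨insert x R', (fun t => insert x t) '' 𝒮'', ?_, ?_, ?_⟩
        · rintro u ⟨t, ht, rfl⟩
          obtain ⟨s, hs, rfl⟩ := h''sub ht
          show insert x (s.erase x) ∈ 𝒮
          rw [Finset.insert_erase hs.2]
          exact hs.1
        · intro hc
          apply h''unc
          refine my_countable_of_injOn (fun t => insert x t)
            (fun t ht => Set.mem_image_of_mem _ ht) ?_ hc
          intro t ht t' ht' h
          have h' : insert x t = insert x t' := h
          have : (insert x t).erase x = (insert x t').erase x := by rw [h']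
          rwa [Finset.erase_insert (hxnot t ht), Finset.erase_insert (hxnot t' ht')] at this
        · rintro u ⟨t, ht, rfl⟩ v ⟨t', ht', rfl⟩ huv
          have htt' : t ≠ t' := by rintro rfl; exact huv rfl
          rw [my_insert_inter_insert, h''pair t ht t' ht' htt']
      · push_neg at hx
        obtain ⟨𝒮', hsub, hunc, hpair⟩ := my_disjoint_subfamily 𝒮 h𝒮 hx
        exact ⟨∅, 𝒮', hsub, hunc, hpair⟩

/-- Δ-system lemma: an uncountable family of finsets contains an uncountable
Δ-subsystem. -/
lemma my_delta_system {α : Type*} [DecidableEq α] (𝒮 : Set (Finset α))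
    (h𝒮 : ¬ 𝒮.Countable) :
    ∃ R : Finset α, ∃ 𝒮' ⊆ 𝒮, ¬ 𝒮'.Countable ∧
      ∀ s ∈ 𝒮', ∀ t ∈ 𝒮', s ≠ t → s ∩ t = R := by
  obtain ⟨n, hn⟩ := my_exists_uncountable_fiber h𝒮 (fun s => s.card)
  obtain ⟨R, 𝒮', hsub, hunc, hpair⟩ :=
    my_delta_system_aux n {s ∈ 𝒮 | s.card = n} (fun s hs => hs.2) hn
  exact ⟨R, 𝒮', fun s hs => (hsub hs).1, hunc, hpair⟩

/-- Let `c : [ω₁]² → ω` (here `W` is a well-ordered uncountable type all of whose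
proper initial segments are countable, i.e. a copy of `ω₁`) have finite-to-one fibres.
Conditions of the poset `ℙ` are pairs `(s, f)` with `s` a finite subset of `W` and
`f` a colouring of `s` (modelled as a total function, only its values on `s` being
relevant) such that no `a < b` in `s` has `f a = f b = c a b`; `r` extends `p` iff
`s^p ⊆ s^r` and the functions agree on `s^p`. Then `ℙ` is ccc: every pairwise
incompatible family of conditions is countable. -/
theorem stmt16 {W : Type*} [LinearOrder W] [WellFoundedLT W] [Uncountable W]
    (hW : ∀ b : W, (Set.Iio b).Countable)
    (c : W → W → ℕ) (hsymm : ∀ a b, c a b = c b a)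
    (hfin : ∀ (b : W) (n : ℕ), {a : W | a < b ∧ c a b = n}.Finite)
    (A : Set (Finset W × (W → ℕ)))
    (hcond : ∀ p ∈ A, ∀ a ∈ p.1, ∀ b ∈ p.1, a < b → ¬ (p.2 a = p.2 b ∧ c a b = p.2 a))
    (hanti : ∀ p ∈ A, ∀ q ∈ A, p ≠ q →
      ¬ ∃ r : Finset W × (W → ℕ),
        (∀ a ∈ r.1, ∀ b ∈ r.1, a < b → ¬ (r.2 a = r.2 b ∧ c a b = r.2 a)) ∧
        (p.1 ⊆ r.1 ∧ ∀ a ∈ p.1, r.2 a = p.2 a) ∧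
        (q.1 ⊆ r.1 ∧ ∀ a ∈ q.1, r.2 a = q.2 a)) :
    A.Countable := by
  classical
  by_contra hA
  -- two conditions with the same support and the same values on it are equal
  have key0 : ∀ p ∈ A, ∀ q ∈ A, p.1 = q.1 → (∀ a ∈ p.1, p.2 a = q.2 a) → p = q := by
    intro p hp q hq hs hf
    by_contra hne
    refine hanti p hp q hq hne ⟨p, hcond p hp, ⟨subset_rfl, fun a _ => rfl⟩, ?_, ?_⟩
    · rw [← hs]
    · intro a ha
      rw [← hs] at ha
      exact hf a ha
  -- each fibre of `Prod.fst` on `A` is countable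
  have hfib : ∀ s : Finset W, {p ∈ A | p.1 = s}.Countable := by
    intro s
    refine my_countable_of_injOn (fun p => (s.sort (·≤·)).map p.2)
      (fun p _ => Set.mem_univ _) ?_ (Set.countable_univ)
    intro p hp q hq h
    simp only at h
    refine key0 p hp.1 q hq.1 (hp.2.trans hq.2.symm) ?_
    intro a ha
    exact List.map_inj_left.mp h a ((Finset.mem_sort _).mpr (hp.2 ▸ ha))
  -- the family of supports is uncountable
  have h𝒮 : ¬ (Prod.fst '' A).Countable := by
    intro hc
    apply hA
    have : A ⊆ ⋃ s ∈ Prod.fst '' A, {p ∈ A | p.1 = s} := by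
      intro p hp
      exact Set.mem_biUnion (Set.mem_image_of_mem _ hp) ⟨hp, rfl⟩
    exact Set.Countable.mono this (Set.Countable.biUnion hc fun s _ => hfib s)
  -- Δ-system
  obtain ⟨R, 𝒮', h'sub, h'unc, h'pair⟩ := my_delta_system _ h𝒮
  -- choose one condition per support
  have hsec : ∀ s ∈ 𝒮', ∃ p, p ∈ A ∧ p.1 = s := fun s hs => by
    obtain ⟨p, hp, hps⟩ := h'sub hs; exact ⟨p, hp, hps⟩
  choose! φ hφA hφ1 using hsec
  set B₀ : Set (Finset W × (W → ℕ)) := φ '' 𝒮' with hB₀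
  have hB₀A : B₀ ⊆ A := by rintro p ⟨s, hs, rfl⟩; exact hφA s hs
  have hB₀unc : ¬ B₀.Countable := by
    intro hc
    apply h'unc
    refine my_countable_of_injOn φ (fun s hs => Set.mem_image_of_mem _ hs) ?_ hc
    intro s hs t ht h
    rw [← hφ1 s hs, ← hφ1 t ht, h]
  have hB₀pair : ∀ p ∈ B₀, ∀ q ∈ B₀, p ≠ q → p.1 ∩ q.1 = R := by
    rintro p ⟨s, hs, rfl⟩ q ⟨t, ht, rfl⟩ hne
    have hst : s ≠ t := by rintro rfl; exact hne rfl
    rw [hφ1 s hs, hφ1 t ht]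
    exact h'pair s hs t ht hst
  -- refine by values on the root
  obtain ⟨L, hL⟩ := my_exists_uncountable_fiber hB₀unc
    (fun p => (R.sort (·≤·)).map p.2)
  set B : Set (Finset W × (W → ℕ)) := {p ∈ B₀ | (R.sort (·≤·)).map p.2 = L} with hBdef
  have hBB₀ : B ⊆ B₀ := fun p hp => hp.1
  have hBunc : ¬ B.Countable := hL
  have hroot : ∀ p ∈ B, ∀ q ∈ B, ∀ a ∈ R, p.2 a = q.2 a := by
    intro p hp q hq a ha
    have : (R.sort (·≤·)).map p.2 = (R.sort (·≤·)).map q.2 := hp.2.trans hq.2.symm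
    exact List.map_inj_left.mp this a ((Finset.mem_sort _).mpr ha)
  -- tails are pairwise disjoint
  have htails : ∀ p ∈ B, ∀ q ∈ B, p ≠ q → (p.1 \ R) ∩ (q.1 \ R) = ∅ := by
    intro p hp q hq hne
    rw [Finset.eq_empty_iff_forall_notMem]
    intro x hx
    rw [Finset.mem_inter, Finset.mem_sdiff, Finset.mem_sdiff] at hx
    obtain ⟨⟨hxp, hxR⟩, ⟨hxq, -⟩⟩ := hx
    exact hxR (hB₀pair p (hBB₀ hp) q (hBB₀ hq) hne ▸ Finset.mem_inter.mpr ⟨hxp, hxq⟩)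
  -- a countably infinite subfamily P₀ of B
  have hBinf : B.Infinite := fun hf => hBunc hf.countable
  set e : ℕ ↪ ↥B := hBinf.natEmbedding _ with he
  set P₀ : Set (Finset W × (W → ℕ)) := Set.range (fun n => (e n : Finset W × (W → ℕ)))
    with hP₀
  have hP₀B : P₀ ⊆ B := by rintro p ⟨n, rfl⟩; exact (e n).2
  have hP₀c : P₀.Countable := Set.countable_range _
  have hP₀inf : P₀.Infinite :=
    Set.infinite_range_of_injective (fun m n h => e.injective (Subtype.ext h))
  -- a strict upper bound w for all supports in P₀
  have hUc : (⋃ p ∈ P₀, (↑p.1 : Set W)).Countable :=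
    Set.Countable.biUnion hP₀c (fun p _ => p.1.finite_toSet.countable)
  obtain ⟨w, hw⟩ : ∃ w : W, ∀ u ∈ ⋃ p ∈ P₀, (↑p.1 : Set W), u < w := by
    by_contra hcon
    push_neg at hcon
    apply Uncountable.not_countable (α := W)
    rw [← Set.countable_univ_iff]
    have : (Set.univ : Set W) ⊆ ⋃ u ∈ ⋃ p ∈ P₀, (↑p.1 : Set W), Set.Iic u := by
      intro x _
      obtain ⟨u, hu, hxu⟩ := hcon x
      exact Set.mem_biUnion hu hxu
    refine Set.Countable.mono this (Set.Countable.biUnion hUc (fun u _ => ?_))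
    have : Set.Iic u = Set.Iio u ∪ {u} := by
      ext y; simp [le_iff_lt_or_eq]
    rw [this]
    exact (hW u).union (Set.countable_singleton u)
  -- pick q in B, outside P₀, with tail above w
  have hbad : {q ∈ B | ∃ y, y ∈ q.1 \ R ∧ y < w}.Countable := by
    have hwit : ∀ q ∈ {q ∈ B | ∃ y, y ∈ q.1 \ R ∧ y < w}, ∃ y, y ∈ q.1 \ R ∧ y < w :=
      fun q hq => hq.2
    choose! ψ hψ1 hψ2 using hwit
    refine my_countable_of_injOn ψ (fun q hq => (hψ2 q hq : ψ q < w)) ?_ (hW w)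
    intro q hq q' hq' h
    by_contra hne
    have h1 := hψ1 q hq
    have h2 := hψ1 q' hq'
    rw [h] at h1
    have := htails q hq.1 q' hq'.1 hne
    have : ψ q' ∈ (q.1 \ R) ∩ (q'.1 \ R) := Finset.mem_inter.mpr ⟨h1, h2⟩
    rw [htails q hq.1 q' hq'.1 hne] at this
    exact absurd this (Finset.notMem_empty _)
  obtain ⟨q, hq⟩ : (B \ (P₀ ∪ {q ∈ B | ∃ y, y ∈ q.1 \ R ∧ y < w})).Nonempty := by
    rw [Set.nonempty_iff_ne_empty]
    intro hemp
    apply hBunc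
    have : B ⊆ P₀ ∪ {q ∈ B | ∃ y, y ∈ q.1 \ R ∧ y < w} := by
      intro b hb
      by_contra hnb
      exact Set.eq_empty_iff_forall_notMem.mp hemp b ⟨hb, hnb⟩
    exact Set.Countable.mono this (hP₀c.union hbad)
  have hqB : q ∈ B := hq.1
  have hqP₀ : q ∉ P₀ := fun h => hq.2 (Or.inl h)
  have hqhigh : ∀ y ∈ q.1 \ R, w ≤ y := by
    intro y hy
    by_contra hlt
    exact hq.2 (Or.inr ⟨hqB, y, hy, lt_of_not_ge hlt⟩)
  -- the finite conflict set F of q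
  set F : Set W := ⋃ b ∈ q.1, {a : W | a < b ∧ c a b = q.2 b} with hF
  have hFfin : F.Finite := Set.Finite.biUnion q.1.finite_toSet (fun b _ => hfin b (q.2 b))
  -- pick p in P₀ whose tail avoids F
  have hbad2 : {p ∈ P₀ | ∃ x, x ∈ p.1 \ R ∧ x ∈ F}.Finite := by
    have hwit : ∀ p ∈ {p ∈ P₀ | ∃ x, x ∈ p.1 \ R ∧ x ∈ F}, ∃ x, x ∈ p.1 \ R ∧ x ∈ F :=
      fun p hp => hp.2
    choose! ψ hψ1 hψ2 using hwit
    refine Set.Finite.of_finite_image (f := ψ) (hFfin.subset ?_) ?_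
    · rintro x ⟨p, hp, rfl⟩
      exact hψ2 p hp
    · intro p hp p' hp' h
      by_contra hne
      have h1 := hψ1 p hp
      have h2 := hψ1 p' hp'
      rw [h] at h1
      have : ψ p' ∈ (p.1 \ R) ∩ (p'.1 \ R) := Finset.mem_inter.mpr ⟨h1, h2⟩
      rw [htails p (hP₀B hp.1) p' (hP₀B hp'.1) hne] at this
      exact absurd this (Finset.notMem_empty _)
  obtain ⟨p, hp⟩ := (hP₀inf.diff hbad2).nonempty
  have hpP₀ : p ∈ P₀ := hp.1
  have hpB : p ∈ B := hP₀B hpP₀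
  have hpF : ∀ x ∈ p.1 \ R, x ∉ F := by
    intro x hx hxF
    exact hp.2 ⟨hpP₀, x, hx, hxF⟩
  have hpq : p ≠ q := by rintro rfl; exact hqP₀ hpP₀
  have hplow : ∀ x ∈ p.1, x < w := fun x hx => hw x (Set.mem_biUnion hpP₀ hx)
  -- root facts
  have hcap : p.1 ∩ q.1 = R := hB₀pair p (hBB₀ hpB) q (hBB₀ hqB) hpq
  have hRp : R ⊆ p.1 := hcap ▸ Finset.inter_subset_left
  have hRq : R ⊆ q.1 := hcap ▸ Finset.inter_subset_right
  have hagree : ∀ a ∈ R, p.2 a = q.2 a := hroot p hpB q hqB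
  -- build the common extension
  set f : W → ℕ := fun x => if x ∈ p.1 then p.2 x else q.2 x with hf
  have hfp : ∀ a ∈ p.1, f a = p.2 a := by intro a ha; simp [hf, ha]
  have hfq : ∀ a ∈ q.1, f a = q.2 a := by
    intro a ha
    by_cases hap : a ∈ p.1
    · have haR : a ∈ R := hcap ▸ Finset.mem_inter.mpr ⟨hap, ha⟩
      simp [hf, hap, hagree a haR]
    · simp [hf, hap]
  refine hanti p (hB₀A (hBB₀ hpB)) q (hB₀A (hBB₀ hqB)) hpq
    ⟨(p.1 ∪ q.1, f), ?_, ⟨Finset.subset_union_left, hfp⟩,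
      ⟨Finset.subset_union_right, hfq⟩⟩
  intro a ha b hb hab hcon
  obtain ⟨h1, h2⟩ := hcon
  simp only at h1 h2
  rw [Finset.mem_union] at ha hb
  by_cases hap : a ∈ p.1
  · by_cases hbp : b ∈ p.1
    · exact hcond p (hB₀A (hBB₀ hpB)) a hap b hbp hab
        ⟨by rw [← hfp a hap, ← hfp b hbp, h1], by rw [← hfp a hap, h2]⟩
    · have hbq : b ∈ q.1 := hb.resolve_left hbp
      by_cases haq : a ∈ q.1
      · exact hcond q (hB₀A (hBB₀ hqB)) a haq b hbq hab
          ⟨by rw [← hfq a haq, ← hfq b hbq, h1], by rw [← hfq a haq, h2]⟩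
      · -- a ∈ tail of p, and a ∈ F : contradiction
        have haR : a ∉ R := fun h => haq (hRq h)
        have haT : a ∈ p.1 \ R := Finset.mem_sdiff.mpr ⟨hap, haR⟩
        apply hpF a haT
        refine Set.mem_biUnion hbq ⟨hab, ?_⟩
        rw [← hfq b hbq, ← h1, h2]
  · have haq : a ∈ q.1 := ha.resolve_left hap
    by_cases hbq : b ∈ q.1
    · exact hcond q (hB₀A (hBB₀ hqB)) a haq b hbq hab
        ⟨by rw [← hfq a haq, ← hfq b hbq, h1], by rw [← hfq a haq, h2]⟩
    · have hbp : b ∈ p.1 := hb.resolve_right hbq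
      -- a in tail of q (above w), b in p (below w): contradicts a < b
      have haR : a ∉ R := fun h => hap (hRp h)
      have hwa : w ≤ a := hqhigh a (Finset.mem_sdiff.mpr ⟨haq, haR⟩)
      exact absurd hab (not_lt.mpr (le_of_lt (lt_of_lt_of_le (hplow b hbp) hwa)))
end
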